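/- arXiv:1303.4575 — 4 statements merged into one kernel-verified Lean document; each statement's English description precedes it below -/
import Mathlib

section
/- Let (γ, ℓ, ℓ⁽²⁾, Y) be coordinate hypersurface data on U with inverse blocks (P, n, n⁽²⁾), derived fields F, U, K, Γ̊, Γ̄, and curvatures R̊, R̄ of Γ̊, Γ̄. Define the fields (I)_{bcd} := ℓ_aR̄^a_{bcd} + ℓ⁽²⁾(∇̄_dK_{bc} − ∇̄_cK_{bd}) + ½K_{bc}∂_dℓ⁽²⁾ − ½K_{bd}∂_cℓ⁽²⁾ and (II)_{abcd} := γ_{af}R̄^f_{bcd} − K_{bd}(∇̄_cℓ_a + ℓ⁽²⁾K_{ca}) + K_{bc}(∇̄_dℓ_a + ℓ⁽²⁾K_{da}) − ℓ_a(∇̄_cK_{bd} − ∇̄_dK_{bc}). Then: (1) (I)_{bcd} = ℓ_aR̊^a_{bcd} + ∇̊_dY_{bc} − ∇̊_cY_{bd} + ℓ⁽²⁾(∇̊_dU_{bc} − ∇̊_cU_{bd}) + ½(U_{bc}∂_dℓ⁽²⁾ − U_{bd}∂_cℓ⁽²⁾) + Y_{bd}((F_{cf} + Y_{cf})n^f +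 ½n⁽²⁾∂_cℓ⁽²⁾) − Y_{bc}((F_{df} + Y_{df})n^f + ½n⁽²⁾∂_dℓ⁽²⁾); (2) (II)_{abcd} = γ_{af}R̊^f_{bcd} + ℓ_a(∇̊_dU_{bc} − ∇̊_cU_{bd}) + Y_{bc}U_{da} − Y_{bd}U_{ca} + U_{bc}Y_{da} − U_{bd}Y_{ca} + n⁽²⁾(Y_{bc}Y_{da} − Y_{bd}Y_{ca}) + U_{bc}F_{da} − U_{bd}F_{ca}. -/
open scoped BigOperators

noncomputable section

namespace HypData

variable {m : ℕ}

/-- Scalar field on ℝ^m. -/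
abbrev Sc (m : ℕ) := (Fin m → ℝ) → ℝ
/-- One-index field. -/
abbrev Vec (m : ℕ) := (Fin m → ℝ) → Fin m → ℝ
/-- Two-index field. -/
abbrev Ten (m : ℕ) := (Fin m → ℝ) → Fin m → Fin m → ℝ
/-- Connection coefficients `Γ x c a b = Γ^c_{ab}` (first index upper). -/
abbrev Conn (m : ℕ) := (Fin m → ℝ) → Fin m → Fin m → Fin m → ℝ
/-- Three-index field. -/
abbrev Ten3 (m : ℕ) := (Fin m → ℝ) → Fin m → Fin m → Fin m → ℝ

/-- Partial derivative of `f` in the `a`-th coordinate direction at `x`. -/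
def pd (a : Fin m) (f : Sc m) (x : Fin m → ℝ) : ℝ :=
  fderiv ℝ f x (Pi.single a 1)

/-- Kronecker delta. -/
def kd (a b : Fin m) : ℝ := if a = b then 1 else 0

/-- Equations (EqP1)-(EqP4): `[[P,n],[nᵀ,n2]]` consists of the inverse blocks of
the block matrix `[[γ,ℓ],[ℓᵀ,ℓ2]]`. -/
def InvBlocks (γ : Fin m → Fin m → ℝ) (ℓ : Fin m → ℝ) (ℓ2 : ℝ)
    (P : Fin m → Fin m → ℝ) (n : Fin m → ℝ) (n2 : ℝ) : Prop :=
  (∀ a b, (∑ c, P a c * γ c b) + n a * ℓ b = kd a b) ∧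
  (∀ a, (∑ b, P a b * ℓ b) + ℓ2 * n a = 0) ∧
  ((∑ a, n a * ℓ a) + n2 * ℓ2 = 1) ∧
  (∀ a, (∑ b, γ a b * n b) + n2 * ℓ a = 0)

/-- ∇_a ω_b. -/
def covD1 (Γ : Conn m) (ω : Vec m) (x : Fin m → ℝ) (a b : Fin m) : ℝ :=
  pd a (fun y => ω y b) x - ∑ d, Γ x d a b * ω x d

/-- ∇_a X^b. -/
def covD1U (Γ : Conn m) (X : Vec m) (x : Fin m → ℝ) (a b : Fin m) : ℝ :=
  pd a (fun y => X y b) x + ∑ d, Γ x b a d * X x d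

/-- ∇_a T_{bc}. -/
def covD2 (Γ : Conn m) (T : Ten m) (x : Fin m → ℝ) (a b c : Fin m) : ℝ :=
  pd a (fun y => T y b c) x - (∑ d, Γ x d a b * T x d c) - (∑ d, Γ x d a c * T x b d)

/-- ∇_a T^{bc}. -/
def covD2U (Γ : Conn m) (T : Ten m) (x : Fin m → ℝ) (a b c : Fin m) : ℝ :=
  pd a (fun y => T y b c) x + (∑ d, Γ x b a d * T x d c) + (∑ d, Γ x c a d * T x b d)

/-- ∇_a S^b_c (first index of `S` upper, second lower). -/
def covD11 (Γ : Conn m) (S : Ten m) (x : Fin m → ℝ) (a b c : Fin m) : ℝ :=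
  pd a (fun y => S y b c) x + (∑ d, Γ x b a d * S x d c) - (∑ d, Γ x d a c * S x b d)

/-- ∇_a Q^{bcd}. -/
def covD3U (Γ : Conn m) (Q : Ten3 m) (x : Fin m → ℝ) (a b c d : Fin m) : ℝ :=
  pd a (fun y => Q y b c d) x + (∑ f, Γ x b a f * Q x f c d)
    + (∑ f, Γ x c a f * Q x b f d) + (∑ f, Γ x d a f * Q x b c f)

/-- Curvature `R^a_{bcd} = ∂_cΓ^a_{db} − ∂_dΓ^a_{cb} + Γ^a_{cf}Γ^f_{db} − Γ^a_{df}Γ^f_{cb}`. -/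
def curv (Γ : Conn m) (x : Fin m → ℝ) (a b c d : Fin m) : ℝ :=
  pd c (fun y => Γ y a d b) x - pd d (fun y => Γ y a c b) x
    + (∑ f, Γ x a c f * Γ x f d b) - (∑ f, Γ x a d f * Γ x f c b)

/-- `F_{ab} = ½(∂_aℓ_b − ∂_bℓ_a)`. -/
def Ff (ℓ : Vec m) (x : Fin m → ℝ) (a b : Fin m) : ℝ :=
  (pd a (fun y => ℓ y b) x - pd b (fun y => ℓ y a) x) / 2

/-- `U_{ab} = ½(n^c∂_cγ_{ab} + γ_{cb}∂_an^c + γ_{ac}∂_bn^c + ℓ_a∂_bn⁽²⁾ + ℓ_b∂_an⁽²⁾)`. -/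
def Uf (γ : Ten m) (ℓ : Vec m) (n : Vec m) (n2 : Sc m)
    (x : Fin m → ℝ) (a b : Fin m) : ℝ :=
  ((∑ c, (n x c * pd c (fun y => γ y a b) x + γ x c b * pd a (fun y => n y c) x
      + γ x a c * pd b (fun y => n y c) x))
    + ℓ x a * pd b n2 x + ℓ x b * pd a n2 x) / 2

/-- Metric hypersurface connection `Γ̊^c_{ab}`. -/
def Gam0 (γ : Ten m) (ℓ : Vec m) (P : Ten m) (n : Vec m)
    (x : Fin m → ℝ) (c a b : Fin m) : ℝ :=
  (∑ d, P x c d * (pd a (fun y => γ y b d) x + pd b (fun y => γ y a d) x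
      - pd d (fun y => γ y a b) x)) / 2
  + n x c * (pd a (fun y => ℓ y b) x + pd b (fun y => ℓ y a) x) / 2

/-- The connection `Γ̄^c_{ab} = Γ̊^c_{ab} − n^c Y_{ab}`. -/
def GamB (γ : Ten m) (ℓ : Vec m) (P : Ten m) (n : Vec m) (Y : Ten m)
    (x : Fin m → ℝ) (c a b : Fin m) : ℝ :=
  Gam0 γ ℓ P n x c a b - n x c * Y x a b

/-- `K_{ab} = n⁽²⁾Y_{ab} + U_{ab}`. -/
def Kf (γ : Ten m) (ℓ : Vec m) (n : Vec m) (n2 : Sc m) (Y : Ten m)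
    (x : Fin m → ℝ) (a b : Fin m) : ℝ :=
  n2 x * Y x a b + Uf γ ℓ n n2 x a b

/-- `φ_a = ½n⁽²⁾∂_aℓ⁽²⁾ + n^b(Y_{ab} + F_{ab})`. -/
def phif (ℓ : Vec m) (ℓ2 : Sc m) (n : Vec m) (n2 : Sc m) (Y : Ten m)
    (x : Fin m → ℝ) (a : Fin m) : ℝ :=
  n2 x * pd a ℓ2 x / 2 + ∑ b, n x b * (Y x a b + Ff ℓ x a b)

/-- `Ψ^b_a = P^{bc}(Y_{ac} + F_{ac}) + ½n^b∂_aℓ⁽²⁾`. -/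
def Psif (ℓ : Vec m) (ℓ2 : Sc m) (P : Ten m) (n : Vec m) (Y : Ten m)
    (x : Fin m → ℝ) (b a : Fin m) : ℝ :=
  (∑ c, P x b c * (Y x a c + Ff ℓ x a c)) + n x b * pd a ℓ2 x / 2

/-- Smoothness of a scalar field on `U`. -/
def SmSc (U : Set (Fin m → ℝ)) (f : Sc m) : Prop := ContDiffOn ℝ (⊤ : ℕ∞) f U
/-- Smoothness of a one-index field on `U`. -/
def SmVec (U : Set (Fin m → ℝ)) (f : Vec m) : Prop :=
  ∀ a, ContDiffOn ℝ (⊤ : ℕ∞) (fun x => f x a) U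
/-- Smoothness of a two-index field on `U`. -/
def SmTen (U : Set (Fin m → ℝ)) (f : Ten m) : Prop :=
  ∀ a b, ContDiffOn ℝ (⊤ : ℕ∞) (fun x => f x a b) U

/-- Smooth coordinate hypersurface metric data on `U`. -/
def MetricData (U : Set (Fin m → ℝ)) (γ : Ten m) (ℓ : Vec m) (ℓ2 : Sc m)
    (P : Ten m) (n : Vec m) (n2 : Sc m) : Prop :=
  SmTen U γ ∧ SmVec U ℓ ∧ SmSc U ℓ2 ∧ SmTen U P ∧ SmVec U n ∧ SmSc U n2 ∧
  (∀ x ∈ U, ∀ a b, γ x a b = γ x b a) ∧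
  (∀ x ∈ U, ∀ a b, P x a b = P x b a) ∧
  (∀ x ∈ U, InvBlocks (γ x) (ℓ x) (ℓ2 x) (P x) (n x) (n2 x))

/-- Gauge-transformed `ℓ`. -/
def gaugeL (γ : Ten m) (ℓ : Vec m) (u : Sc m) (V : Vec m) : Vec m :=
  fun x a => u x * (ℓ x a + ∑ b, V x b * γ x a b)

/-- Gauge-transformed `ℓ⁽²⁾`. -/
def gaugeL2 (γ : Ten m) (ℓ : Vec m) (ℓ2 : Sc m) (u : Sc m) (V : Vec m) : Sc m :=
  fun x => u x ^ 2 * (ℓ2 x + 2 * (∑ a, V x a * ℓ x a) + ∑ a, ∑ b, V x a * V x b * γ x a b)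

/-- Gauge-transformed `Y`. -/
def gaugeY (γ : Ten m) (ℓ : Vec m) (Y : Ten m) (u : Sc m) (V : Vec m) : Ten m :=
  fun x a b => u x * Y x a b + (ℓ x a * pd b u x + ℓ x b * pd a u x) / 2
    + ((u x * ∑ c, V x c * pd c (fun y => γ y a b) x)
      + (∑ c, γ x c b * pd a (fun y => u y * V y c) x)
      + (∑ c, γ x a c * pd b (fun y => u y * V y c) x)) / 2

/-- Gauge-transformed `P`. -/
def gaugeP (P : Ten m) (n : Vec m) (n2 : Sc m) (V : Vec m) : Ten m :=
  fun x a b => P x a b + n2 x * V x a * V x b - V x a * n x b - V x b * n x a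

/-- Gauge-transformed `n`. -/
def gaugeN (n : Vec m) (n2 : Sc m) (u : Sc m) (V : Vec m) : Vec m :=
  fun x a => (u x)⁻¹ * (n x a - n2 x * V x a)

/-- Gauge-transformed `n⁽²⁾`. -/
def gaugeN2 (n2 : Sc m) (u : Sc m) : Sc m :=
  fun x => ((u x) ^ 2)⁻¹ * n2 x

/-- Shell energy-momentum tensor `τ^{fa}` built pointwise from the jump `V_{ab}`. -/
def tauP (P : Fin m → Fin m → ℝ) (n : Fin m → ℝ) (n2 : ℝ) (V : Fin m → Fin m → ℝ)
    (f a : Fin m) : ℝ :=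
  (∑ c, ∑ d, (n f * P a c + n a * P f c) * n d * V c d)
  - (∑ c, ∑ d, (n2 * P f c * P a d + P f a * n c * n d) * V c d)
  + (n2 * P f a - n f * n a) * (∑ c, ∑ d, P c d * V c d)

/-- `τ^f_c = −(n⁽²⁾P^{bd} − n^bn^d)(δ^f_dV_{bc} − δ^f_cV_{bd})`. -/
def tauMixP (P : Fin m → Fin m → ℝ) (n : Fin m → ℝ) (n2 : ℝ)
    (V : Fin m → Fin m → ℝ) (f c : Fin m) : ℝ :=
  -(∑ b, ∑ d, (n2 * P b d - n b * n d) * (kd f d * V b c - kd f c * V b d))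

/-- `T^f = (P^{bf}n^c − P^{bc}n^f)V_{bc}`. -/
def tauVecP (P : Fin m → Fin m → ℝ) (n : Fin m → ℝ) (V : Fin m → Fin m → ℝ)
    (f : Fin m) : ℝ :=
  ∑ b, ∑ c, (P b f * n c - P b c * n f) * V b c

/-- The block matrix 𝔸. -/
def blockA (γ : Ten m) (ℓ : Vec m) (ℓ2 : Sc m) (x : Fin m → ℝ) :
    Matrix (Fin m ⊕ Unit) (Fin m ⊕ Unit) ℝ :=
  fun i j =>
    match i, j with
    | Sum.inl a, Sum.inl b => γ x a b
    | Sum.inl a, Sum.inr _ => ℓ x a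
    | Sum.inr _, Sum.inl b => ℓ x b
    | Sum.inr _, Sum.inr _ => ℓ2 x

/-- `det 𝔸` as a scalar field. -/
def detA (γ : Ten m) (ℓ : Vec m) (ℓ2 : Sc m) (x : Fin m → ℝ) : ℝ :=
  (blockA γ ℓ ℓ2 x).det

end HypData

namespace HypData

variable {m : ℕ}

theorem pd_congr_open {U : Set (Fin m → ℝ)} (hU : IsOpen U) {x : Fin m → ℝ} (hx : x ∈ U)
    {f g : Sc m} (h : ∀ y ∈ U, f y = g y) (a : Fin m) : pd a f x = pd a g x := by
  unfold pd
  rw [Filter.EventuallyEq.fderiv_eq (Filter.eventuallyEq_of_mem (hU.mem_nhds hx) h)]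

theorem pd_const (a : Fin m) (c : ℝ) (x : Fin m → ℝ) : pd a (fun _ => c) x = 0 := by
  simp [pd]

theorem pd_add {f g : Sc m} {x : Fin m → ℝ} (hf : DifferentiableAt ℝ f x)
    (hg : DifferentiableAt ℝ g x) (a : Fin m) :
    pd a (fun y => f y + g y) x = pd a f x + pd a g x := by
  unfold pd; rw [fderiv_fun_add hf hg]; rfl

theorem pd_sub {f g : Sc m} {x : Fin m → ℝ} (hf : DifferentiableAt ℝ f x)
    (hg : DifferentiableAt ℝ g x) (a : Fin m) :
    pd a (fun y => f y - g y) x = pd a f x - pd a g x := by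
  unfold pd; rw [fderiv_fun_sub hf hg]; rfl

theorem pd_mul {f g : Sc m} {x : Fin m → ℝ} (hf : DifferentiableAt ℝ f x)
    (hg : DifferentiableAt ℝ g x) (a : Fin m) :
    pd a (fun y => f y * g y) x = pd a f x * g x + f x * pd a g x := by
  unfold pd; rw [fderiv_fun_mul hf hg]; simp [mul_comm]; ring

theorem pd_sum {ι : Type*} {s : Finset ι} {f : ι → Sc m} {x : Fin m → ℝ}
    (hf : ∀ i ∈ s, DifferentiableAt ℝ (f i) x) (a : Fin m) :
    pd a (fun y => ∑ i ∈ s, f i y) x = ∑ i ∈ s, pd a (f i) x := by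
  unfold pd; rw [fderiv_fun_sum hf]; simp

theorem pd_div_const {f : Sc m} {x : Fin m → ℝ} (hf : DifferentiableAt ℝ f x) (c : ℝ)
    (a : Fin m) : pd a (fun y => f y / c) x = pd a f x / c := by
  unfold pd
  simp only [div_eq_mul_inv]
  rw [fderiv_mul_const hf]
  simp [mul_comm]

theorem SmSc.pd' {U : Set (Fin m → ℝ)} (hU : IsOpen U) {f : Sc m} (hf : SmSc U f) (a : Fin m) :
    SmSc U (pd a f) := by
  have h1 : ContDiffOn ℝ (⊤ : ℕ∞) (fderiv ℝ f) U := hf.fderiv_of_isOpen hU (by simp)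
  exact h1.clm_apply contDiffOn_const

theorem SmSc.dAt {U : Set (Fin m → ℝ)} (hU : IsOpen U) {f : Sc m} (hf : SmSc U f)
    {x : Fin m → ℝ} (hx : x ∈ U) : DifferentiableAt ℝ f x :=
  (hf.contDiffAt (hU.mem_nhds hx)).differentiableAt (by simp)

theorem SmSc.mul' {U : Set (Fin m → ℝ)} {f g : Sc m} (hf : SmSc U f) (hg : SmSc U g) :
    SmSc U (fun y => f y * g y) := ContDiffOn.mul hf hg

theorem SmSc.add' {U : Set (Fin m → ℝ)} {f g : Sc m} (hf : SmSc U f) (hg : SmSc U g) :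
    SmSc U (fun y => f y + g y) := ContDiffOn.add hf hg

theorem SmSc.sub' {U : Set (Fin m → ℝ)} {f g : Sc m} (hf : SmSc U f) (hg : SmSc U g) :
    SmSc U (fun y => f y - g y) := ContDiffOn.sub hf hg

theorem SmSc.sum' {U : Set (Fin m → ℝ)} {ι : Type*} {s : Finset ι} {f : ι → Sc m}
    (hf : ∀ i ∈ s, SmSc U (f i)) : SmSc U (fun y => ∑ i ∈ s, f i y) :=
  ContDiffOn.sum hf

theorem SmSc.divc {U : Set (Fin m → ℝ)} {f : Sc m} (hf : SmSc U f) (c : ℝ) :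
    SmSc U (fun y => f y / c) := ContDiffOn.div_const hf c

theorem smsc_const {U : Set (Fin m → ℝ)} (c : ℝ) : SmSc U (fun _ : Fin m → ℝ => c) :=
  contDiffOn_const

end HypData

namespace HypData

section Aux2
variable {m : ℕ} {U : Set (Fin m → ℝ)} {γ : Ten m} {ℓ : Vec m} {ℓ2 : Sc m}
  {P : Ten m} {n : Vec m} {n2 : Sc m} {Y : Ten m} {x : Fin m → ℝ}

theorem smGam0 (hU : IsOpen U) (hγ : SmTen U γ) (hℓ : SmVec U ℓ) (hP : SmTen U P)
    (hn : SmVec U n) (c a b : Fin m) : SmSc U (fun y => Gam0 γ ℓ P n y c a b) := by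
  have pγ : ∀ e a b, SmSc U (pd e fun y => γ y a b) := fun e a b => SmSc.pd' hU (hγ a b) e
  have pℓ : ∀ e a, SmSc U (pd e fun y => ℓ y a) := fun e a => SmSc.pd' hU (hℓ a) e
  exact SmSc.add'
    (SmSc.divc (SmSc.sum' fun d _ =>
      SmSc.mul' (hP c d) (SmSc.sub' (SmSc.add' (pγ a b d) (pγ b a d)) (pγ d a b))) 2)
    (SmSc.divc (SmSc.mul' (hn c) (SmSc.add' (pℓ a b) (pℓ b a))) 2)

theorem smUf (hU : IsOpen U) (hγ : SmTen U γ) (hℓ : SmVec U ℓ) (hn : SmVec U n)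
    (hn2 : SmSc U n2) (a b : Fin m) : SmSc U (fun y => Uf γ ℓ n n2 y a b) := by
  have pγ : ∀ e a b, SmSc U (pd e fun y => γ y a b) := fun e a b => SmSc.pd' hU (hγ a b) e
  have pn : ∀ e a, SmSc U (pd e fun y => n y a) := fun e a => SmSc.pd' hU (hn a) e
  have pn2 : ∀ e, SmSc U (pd e n2) := fun e => SmSc.pd' hU hn2 e
  exact SmSc.divc
    (SmSc.add' (SmSc.add' (SmSc.sum' fun c _ =>
        SmSc.add' (SmSc.add' (SmSc.mul' (hn c) (pγ c a b)) (SmSc.mul' (hγ c b) (pn a c)))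
          (SmSc.mul' (hγ a c) (pn b c)))
      (SmSc.mul' (hℓ a) (pn2 b))) (SmSc.mul' (hℓ b) (pn2 a))) 2

theorem smKf (hU : IsOpen U) (hγ : SmTen U γ) (hℓ : SmVec U ℓ) (hn : SmVec U n)
    (hn2 : SmSc U n2) (hY : SmTen U Y) (a b : Fin m) :
    SmSc U (fun y => Kf γ ℓ n n2 Y y a b) :=
  SmSc.add' (SmSc.mul' hn2 (hY a b)) (smUf hU hγ hℓ hn hn2 a b)

end Aux2
end HypData

namespace HypData

section Aux3
variable {m : ℕ} {U : Set (Fin m → ℝ)} {γ : Ten m} {ℓ : Vec m} {ℓ2 : Sc m}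
  {P : Ten m} {n : Vec m} {n2 : Sc m} {Y : Ten m} {x : Fin m → ℝ}

/-- Derivative of the relation `∑ n ℓ + n2 ℓ2 = 1`. -/
theorem R3' (hU : IsOpen U) (hd : MetricData U γ ℓ ℓ2 P n n2) (hx : x ∈ U) (e : Fin m) :
    (∑ a, (pd e (fun y => n y a) x * ℓ x a + n x a * pd e (fun y => ℓ y a) x))
      + (pd e n2 x * ℓ2 x + n2 x * pd e ℓ2 x) = 0 := by
  obtain ⟨hγ, hℓ, hℓ2, hP, hn, hn2, hγs, hPs, hinv⟩ := hd
  have dn : ∀ a, DifferentiableAt ℝ (fun y => n y a) x := fun a => SmSc.dAt hU (hn a) hx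
  have dℓ : ∀ a, DifferentiableAt ℝ (fun y => ℓ y a) x := fun a => SmSc.dAt hU (hℓ a) hx
  have dn2 : DifferentiableAt ℝ n2 x := SmSc.dAt hU hn2 hx
  have dℓ2 : DifferentiableAt ℝ ℓ2 x := SmSc.dAt hU hℓ2 hx
  have h0 : pd e (fun y => (∑ a, n y a * ℓ y a) + n2 y * ℓ2 y) x = 0 := by
    rw [pd_congr_open hU hx (fun y hy => (hinv y hy).2.2.1) e, pd_const]
  rw [pd_add (DifferentiableAt.fun_sum fun i _ => (dn i).fun_mul (dℓ i)) (dn2.fun_mul dℓ2),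
    pd_sum (fun i _ => (dn i).fun_mul (dℓ i)), pd_mul dn2 dℓ2] at h0
  rw [← h0]
  congr 1
  exact Finset.sum_congr rfl fun i _ => (pd_mul (dn i) (dℓ i) e).symm

/-- Derivative of the relation `∑ γ n + n2 ℓ = 0`. -/
theorem R4' (hU : IsOpen U) (hd : MetricData U γ ℓ ℓ2 P n n2) (hx : x ∈ U) (e a : Fin m) :
    (∑ c, (pd e (fun y => γ y a c) x * n x c + γ x a c * pd e (fun y => n y c) x))
      + (pd e n2 x * ℓ x a + n2 x * pd e (fun y => ℓ y a) x) = 0 := by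
  obtain ⟨hγ, hℓ, hℓ2, hP, hn, hn2, hγs, hPs, hinv⟩ := hd
  have dn : ∀ a, DifferentiableAt ℝ (fun y => n y a) x := fun a => SmSc.dAt hU (hn a) hx
  have dℓ : ∀ a, DifferentiableAt ℝ (fun y => ℓ y a) x := fun a => SmSc.dAt hU (hℓ a) hx
  have dγ : ∀ a b, DifferentiableAt ℝ (fun y => γ y a b) x :=
    fun a b => SmSc.dAt hU (hγ a b) hx
  have dn2 : DifferentiableAt ℝ n2 x := SmSc.dAt hU hn2 hx
  have h0 : pd e (fun y => (∑ c, γ y a c * n y c) + n2 y * ℓ y a) x = 0 := by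
    rw [pd_congr_open hU hx (fun y hy => (hinv y hy).2.2.2 a) e, pd_const]
  rw [pd_add (DifferentiableAt.fun_sum fun i _ => (dγ a i).fun_mul (dn i)) (dn2.fun_mul (dℓ a)),
    pd_sum (fun i _ => (dγ a i).fun_mul (dn i)), pd_mul dn2 (dℓ a)] at h0
  rw [← h0]
  congr 1
  exact Finset.sum_congr rfl fun i _ => (pd_mul (dγ a i) (dn i) e).symm

/-- Derivatives of a symmetric tensor are symmetric. -/
theorem pd_symm (hU : IsOpen U) {T : Ten m} (hTs : ∀ y ∈ U, ∀ a b, T y a b = T y b a)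
    (hx : x ∈ U) (e a b : Fin m) :
    pd e (fun y => T y a b) x = pd e (fun y => T y b a) x :=
  pd_congr_open hU hx (fun y hy => hTs y hy a b) e

/-- `U_{ab}` rewritten with only `γ, ℓ` derivatives. -/
theorem Uexp (hU : IsOpen U) (hd : MetricData U γ ℓ ℓ2 P n n2) (hx : x ∈ U) (a b : Fin m) :
    Uf γ ℓ n n2 x a b
      = -(((∑ c, n x c * (pd a (fun y => γ y b c) x + pd b (fun y => γ y a c) x
          - pd c (fun y => γ y a b) x))
        + n2 x * (pd a (fun y => ℓ y b) x + pd b (fun y => ℓ y a) x)) / 2) := by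
  have hA := R4' hU hd hx a b
  have hB := R4' hU hd hx b a
  rw [Finset.sum_add_distrib] at hA hB
  obtain ⟨hγ, hℓ, hℓ2, hP, hn, hn2, hγs, hPs, hinv⟩ := hd
  unfold Uf
  rw [Finset.sum_add_distrib, Finset.sum_add_distrib]
  have b1 : (∑ c, γ x c b * pd a (fun y => n y c) x)
      = ∑ c, γ x b c * pd a (fun y => n y c) x :=
    Finset.sum_congr rfl fun i _ => by rw [hγs x hx i b]
  have b2 : (∑ c, n x c * pd a (fun y => γ y b c) x)
      = ∑ c, pd a (fun y => γ y b c) x * n x c :=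
    Finset.sum_congr rfl fun i _ => mul_comm _ _
  have b3 : (∑ c, n x c * pd b (fun y => γ y a c) x)
      = ∑ c, pd b (fun y => γ y a c) x * n x c :=
    Finset.sum_congr rfl fun i _ => mul_comm _ _
  have b4 : (∑ c, n x c * (pd a (fun y => γ y b c) x + pd b (fun y => γ y a c) x
      - pd c (fun y => γ y a b) x))
      = (∑ c, n x c * pd a (fun y => γ y b c) x) + (∑ c, n x c * pd b (fun y => γ y a c) x)
        - ∑ c, n x c * pd c (fun y => γ y a b) x := by
    rw [← Finset.sum_add_distrib, ← Finset.sum_sub_distrib]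
    exact Finset.sum_congr rfl fun i _ => by ring
  linear_combination (hA + hB + b1 + b2 + b3 + b4) / 2

/-- `U` is symmetric. -/
theorem Uf_symm (hU : IsOpen U) (hd : MetricData U γ ℓ ℓ2 P n n2) (hx : x ∈ U) (a b : Fin m) :
    Uf γ ℓ n n2 x a b = Uf γ ℓ n n2 x b a := by
  have h1 := Uexp hU hd hx a b
  have h2 := Uexp hU hd hx b a
  obtain ⟨hγ, hℓ, hℓ2, hP, hn, hn2, hγs, hPs, hinv⟩ := hd
  have b1 : (∑ c, n x c * (pd a (fun y => γ y b c) x + pd b (fun y => γ y a c) x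
      - pd c (fun y => γ y a b) x))
      = ∑ c, n x c * (pd b (fun y => γ y a c) x + pd a (fun y => γ y b c) x
        - pd c (fun y => γ y b a) x) :=
    Finset.sum_congr rfl fun i _ => by
      rw [pd_symm hU hγs hx i a b]; ring
  linear_combination h1 - h2 - b1 / 2

end Aux3
end HypData

namespace HypData

section Aux4
variable {m : ℕ} {U : Set (Fin m → ℝ)} {γ : Ten m} {ℓ : Vec m} {ℓ2 : Sc m}
  {P : Ten m} {n : Vec m} {n2 : Sc m} {Y : Ten m} {x : Fin m → ℝ}

theorem swap_sum (f : Fin m → ℝ) (g : Fin m → Fin m → ℝ) (h : Fin m → ℝ) :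
    (∑ a, f a * ∑ d, g a d * h d) = ∑ d, (∑ a, f a * g a d) * h d := by
  simp_rw [Finset.mul_sum, Finset.sum_mul]
  rw [Finset.sum_comm]
  exact Finset.sum_congr rfl fun d _ => Finset.sum_congr rfl fun a _ => by ring

theorem kd_sum (a : Fin m) (f : Fin m → ℝ) : ∑ d, kd d a * f d = f a := by
  simp [kd, ite_mul]

theorem neg_mul_sum (c : ℝ) (g h : Fin m → ℝ) :
    (∑ d, -(c * g d) * h d) = -(c * ∑ d, g d * h d) := by
  rw [Finset.mul_sum, ← Finset.sum_neg_distrib]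
  exact Finset.sum_congr rfl fun d _ => by ring

/-- Contraction `ℓ_a Γ̊^a_{cf} = ℓ² U_{cf} + ½(∂_cℓ_f + ∂_fℓ_c)`. -/
theorem lGam0 (hU : IsOpen U) (hd : MetricData U γ ℓ ℓ2 P n n2) (hx : x ∈ U) (c f : Fin m) :
    (∑ a, ℓ x a * Gam0 γ ℓ P n x a c f)
      = ℓ2 x * Uf γ ℓ n n2 x c f
        + (pd c (fun y => ℓ y f) x + pd f (fun y => ℓ y c) x) / 2 := by
  have hUe := Uexp hU hd hx c f
  obtain ⟨hγ, hℓ, hℓ2, hP, hn, hn2, hγs, hPs, hinv⟩ := hd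
  set Gd : Fin m → ℝ := fun d => pd c (fun y => γ y f d) x + pd f (fun y => γ y c d) x
    - pd d (fun y => γ y c f) x with hGd
  set S : ℝ := pd c (fun y => ℓ y f) x + pd f (fun y => ℓ y c) x with hS
  have key : ∀ a, ℓ x a * Gam0 γ ℓ P n x a c f
      = (ℓ x a * ∑ d, P x a d * Gd d) / 2 + (ℓ x a * n x a) * (S / 2) := by
    intro a; simp only [Gam0, hGd, hS]; ring
  have inner : ∀ d, (∑ a, ℓ x a * P x a d) = -(ℓ2 x * n x d) := by
    intro d
    have h2 := (hinv x hx).2.1 d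
    have h3 : (∑ a, ℓ x a * P x a d) = ∑ b, P x d b * ℓ x b :=
      Finset.sum_congr rfl fun i _ => by rw [hPs x hx i d]; ring
    linarith
  have h7 : (∑ a, ℓ x a * n x a) = 1 - n2 x * ℓ2 x := by
    have h2 := (hinv x hx).2.2.1
    have h3 : (∑ a, ℓ x a * n x a) = ∑ a, n x a * ℓ x a :=
      Finset.sum_congr rfl fun i _ => mul_comm _ _
    linarith
  have h4 : (∑ a, ℓ x a * Gam0 γ ℓ P n x a c f)
      = (∑ d, (∑ a, ℓ x a * P x a d) * Gd d) / 2 + (∑ a, ℓ x a * n x a) * (S / 2) := by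
    rw [Finset.sum_congr rfl fun a _ => key a, Finset.sum_add_distrib, ← Finset.sum_div,
      ← Finset.sum_mul, swap_sum]
  rw [h4, Finset.sum_congr rfl fun d _ => by rw [inner d], neg_mul_sum, h7]
  simp only [hGd, hS]
  linear_combination (-(ℓ2 x)) * hUe

/-- Contraction `γ_{ag} Γ̊^g_{cf} = ½(∂_cγ_{fa} + ∂_fγ_{ca} − ∂_aγ_{cf}) + ℓ_a U_{cf}`. -/
theorem gGam0 (hU : IsOpen U) (hd : MetricData U γ ℓ ℓ2 P n n2) (hx : x ∈ U) (a c f : Fin m) :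
    (∑ g, γ x a g * Gam0 γ ℓ P n x g c f)
      = (pd c (fun y => γ y f a) x + pd f (fun y => γ y c a) x
          - pd a (fun y => γ y c f) x) / 2
        + ℓ x a * Uf γ ℓ n n2 x c f := by
  have hUe := Uexp hU hd hx c f
  obtain ⟨hγ, hℓ, hℓ2, hP, hn, hn2, hγs, hPs, hinv⟩ := hd
  set Gd : Fin m → ℝ := fun d => pd c (fun y => γ y f d) x + pd f (fun y => γ y c d) x
    - pd d (fun y => γ y c f) x with hGd
  set S : ℝ := pd c (fun y => ℓ y f) x + pd f (fun y => ℓ y c) x with hS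
  have key : ∀ g, γ x a g * Gam0 γ ℓ P n x g c f
      = (γ x a g * ∑ d, P x g d * Gd d) / 2 + (γ x a g * n x g) * (S / 2) := by
    intro g; simp only [Gam0, hGd, hS]; ring
  have inner : ∀ d, (∑ g, γ x a g * P x g d) = kd d a - n x d * ℓ x a := by
    intro d
    have h2 := (hinv x hx).1 d a
    have h3 : (∑ g, γ x a g * P x g d) = ∑ g, P x d g * γ x g a :=
      Finset.sum_congr rfl fun i _ => by rw [hPs x hx i d, hγs x hx i a]; ring
    linarith
  have h4 : (∑ g, γ x a g * Gam0 γ ℓ P n x g c f)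
      = (∑ d, (∑ g, γ x a g * P x g d) * Gd d) / 2 + (∑ g, γ x a g * n x g) * (S / 2) := by
    rw [Finset.sum_congr rfl fun g _ => key g, Finset.sum_add_distrib, ← Finset.sum_div,
      ← Finset.sum_mul, swap_sum]
  have h5 : (∑ d, (kd d a - n x d * ℓ x a) * Gd d)
      = Gd a - ℓ x a * ∑ d, n x d * Gd d := by
    simp_rw [sub_mul]
    rw [Finset.sum_sub_distrib, kd_sum, Finset.mul_sum]
    congr 1
    exact Finset.sum_congr rfl fun d _ => by ring
  have h6 := (hinv x hx).2.2.2 a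
  rw [h4, Finset.sum_congr rfl fun d _ => by rw [inner d], h5]
  simp only [hGd, hS]
  linear_combination (-(ℓ x a)) * hUe
    + ((pd c (fun y => ℓ y f) x + pd f (fun y => ℓ y c) x) / 2) * h6

/-- `Γ̊` is symmetric in its lower indices. -/
theorem Gam0_symm (hU : IsOpen U) (hd : MetricData U γ ℓ ℓ2 P n n2) (hx : x ∈ U)
    (c a b : Fin m) : Gam0 γ ℓ P n x c a b = Gam0 γ ℓ P n x c b a := by
  obtain ⟨hγ, hℓ, hℓ2, hP, hn, hn2, hγs, hPs, hinv⟩ := hd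
  unfold Gam0
  have h1 : (∑ d, P x c d * (pd a (fun y => γ y b d) x + pd b (fun y => γ y a d) x
      - pd d (fun y => γ y a b) x))
      = ∑ d, P x c d * (pd b (fun y => γ y a d) x + pd a (fun y => γ y b d) x
      - pd d (fun y => γ y b a) x) :=
    Finset.sum_congr rfl fun d _ => by rw [pd_symm hU hγs hx d a b]; ring
  rw [h1]; ring

end Aux4
end HypData

namespace HypData

section Aux5
variable {m : ℕ} {U : Set (Fin m → ℝ)} {γ : Ten m} {ℓ : Vec m} {ℓ2 : Sc m}
  {P : Ten m} {n : Vec m} {n2 : Sc m} {Y : Ten m} {x : Fin m → ℝ}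

theorem sum_expand (A B C D : Fin m → ℝ) :
    ∑ f, (A f - B f) * (C f - D f)
      = (((∑ f, A f * C f) - ∑ f, A f * D f) - ∑ f, B f * C f) + ∑ f, B f * D f := by
  rw [← Finset.sum_sub_distrib, ← Finset.sum_sub_distrib, ← Finset.sum_add_distrib]
  exact Finset.sum_congr rfl fun f _ => by ring

theorem split_sum (c0 : ℝ) (A B C : Fin m → ℝ) :
    ∑ f, A f * (c0 * B f + C f) = c0 * (∑ f, A f * B f) + ∑ f, A f * C f := by
  rw [Finset.mul_sum, ← Finset.sum_add_distrib]
  exact Finset.sum_congr rfl fun f _ => by ring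

/-- Expansion of the curvature of `Γ̄ = Γ̊ − n ⊗ Y`. -/
theorem S1 (hU : IsOpen U) (hd : MetricData U γ ℓ ℓ2 P n n2) (hYsm : SmTen U Y)
    (hx : x ∈ U) (a b c d : Fin m) :
    curv (GamB γ ℓ P n Y) x a b c d
      = curv (Gam0 γ ℓ P n) x a b c d
        - (pd c (fun y => n y a) x * Y x d b + n x a * pd c (fun y => Y y d b) x)
        + (pd d (fun y => n y a) x * Y x c b + n x a * pd d (fun y => Y y c b) x)
        - Y x d b * (∑ f, Gam0 γ ℓ P n x a c f * n x f)
        + Y x c b * (∑ f, Gam0 γ ℓ P n x a d f * n x f)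
        - n x a * (∑ f, Y x c f * Gam0 γ ℓ P n x f d b)
        + n x a * (∑ f, Y x d f * Gam0 γ ℓ P n x f c b)
        + n x a * (Y x d b * (∑ f, n x f * Y x c f))
        - n x a * (Y x c b * (∑ f, n x f * Y x d f)) := by
  obtain ⟨hγ, hℓ, hℓ2, hP, hn, hn2, hγs, hPs, hinv⟩ := hd
  have dG : ∀ c' a' b', DifferentiableAt ℝ (fun y => Gam0 γ ℓ P n y c' a' b') x :=
    fun c' a' b' => SmSc.dAt hU (smGam0 hU hγ hℓ hP hn c' a' b') hx
  have dn : ∀ a', DifferentiableAt ℝ (fun y => n y a') x := fun a' => SmSc.dAt hU (hn a') hx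
  have dY : ∀ a' b', DifferentiableAt ℝ (fun y => Y y a' b') x :=
    fun a' b' => SmSc.dAt hU (hYsm a' b') hx
  have hpd : ∀ (e a' c' b' : Fin m),
      pd e (fun y => GamB γ ℓ P n Y y a' c' b') x
        = pd e (fun y => Gam0 γ ℓ P n y a' c' b') x
          - (pd e (fun y => n y a') x * Y x c' b' + n x a' * pd e (fun y => Y y c' b') x) := by
    intro e a' c' b'
    have h1 : (fun y => GamB γ ℓ P n Y y a' c' b')
        = fun y => Gam0 γ ℓ P n y a' c' b' - n y a' * Y y c' b' := rfl
    rw [h1, pd_sub (dG a' c' b') ((dn a').fun_mul (dY c' b')), pd_mul (dn a') (dY c' b')]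
  have hq : ∀ (c' d' : Fin m),
      (∑ f, GamB γ ℓ P n Y x a c' f * GamB γ ℓ P n Y x f d' b)
        = (∑ f, Gam0 γ ℓ P n x a c' f * Gam0 γ ℓ P n x f d' b)
          - Y x d' b * (∑ f, Gam0 γ ℓ P n x a c' f * n x f)
          - n x a * (∑ f, Y x c' f * Gam0 γ ℓ P n x f d' b)
          + n x a * (Y x d' b * (∑ f, n x f * Y x c' f)) := by
    intro c' d'
    have h1 : (∑ f, GamB γ ℓ P n Y x a c' f * GamB γ ℓ P n Y x f d' b)
        = ∑ f, ((fun f => Gam0 γ ℓ P n x a c' f) f - (fun f => n x a * Y x c' f) f)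
            * ((fun f => Gam0 γ ℓ P n x f d' b) f - (fun f => n x f * Y x d' b) f) := rfl
    rw [h1, sum_expand]
    have b1 : (∑ f, Gam0 γ ℓ P n x a c' f * (n x f * Y x d' b))
        = Y x d' b * (∑ f, Gam0 γ ℓ P n x a c' f * n x f) := by
      rw [Finset.mul_sum]; exact Finset.sum_congr rfl fun f _ => by ring
    have b2 : (∑ f, n x a * Y x c' f * Gam0 γ ℓ P n x f d' b)
        = n x a * (∑ f, Y x c' f * Gam0 γ ℓ P n x f d' b) := by
      rw [Finset.mul_sum]; exact Finset.sum_congr rfl fun f _ => by ring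
    have b3 : (∑ f, n x a * Y x c' f * (n x f * Y x d' b))
        = n x a * (Y x d' b * (∑ f, n x f * Y x c' f)) := by
      rw [Finset.mul_sum, Finset.mul_sum]; exact Finset.sum_congr rfl fun f _ => by ring
    rw [b1, b2, b3]
  unfold curv
  rw [hpd c a d b, hpd d a c b, hq c d, hq d c]
  ring

end Aux5
end HypData

namespace HypData

section Aux6
variable {m : ℕ} {U : Set (Fin m → ℝ)} {γ : Ten m} {ℓ : Vec m} {ℓ2 : Sc m}
  {P : Ten m} {n : Vec m} {n2 : Sc m} {Y : Ten m} {x : Fin m → ℝ}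

/-- Contraction of the curvature of `Γ̄` with `ℓ`. -/
theorem C1 (hU : IsOpen U) (hd : MetricData U γ ℓ ℓ2 P n n2) (hYsm : SmTen U Y)
    (hYs : ∀ y ∈ U, ∀ a b, Y y a b = Y y b a) (hx : x ∈ U) (b c d : Fin m) :
    (∑ a, ℓ x a * curv (GamB γ ℓ P n Y) x a b c d)
      = (∑ a, ℓ x a * curv (Gam0 γ ℓ P n) x a b c d)
        - Y x d b * (∑ f, pd c (fun y => n y f) x * ℓ x f)
        + Y x c b * (∑ f, pd d (fun y => n y f) x * ℓ x f)
        - (1 - n2 x * ℓ2 x) * pd c (fun y => Y y d b) x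
        + (1 - n2 x * ℓ2 x) * pd d (fun y => Y y c b) x
        - Y x d b * (ℓ2 x * (∑ f, n x f * Uf γ ℓ n n2 x f c)
            + (∑ f, n x f * pd c (fun y => ℓ y f) x) / 2
            + (∑ f, n x f * pd f (fun y => ℓ y c) x) / 2)
        + Y x c b * (ℓ2 x * (∑ f, n x f * Uf γ ℓ n n2 x f d)
            + (∑ f, n x f * pd d (fun y => ℓ y f) x) / 2
            + (∑ f, n x f * pd f (fun y => ℓ y d) x) / 2)
        - (1 - n2 x * ℓ2 x) * (∑ f, Gam0 γ ℓ P n x f d b * Y x f c)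
        + (1 - n2 x * ℓ2 x) * (∑ f, Gam0 γ ℓ P n x f c b * Y x f d)
        + (1 - n2 x * ℓ2 x) * (Y x d b * (∑ f, n x f * Y x f c)
            - Y x c b * (∑ f, n x f * Y x f d)) := by
  have hμ : (∑ a, n x a * ℓ x a) = 1 - n2 x * ℓ2 x := by
    have := (hd.2.2.2.2.2.2.2.2 x hx).2.2.1; linarith
  have e1 : ∀ a, ℓ x a * curv (GamB γ ℓ P n Y) x a b c d
      = ℓ x a * curv (Gam0 γ ℓ P n) x a b c d
        - Y x d b * (pd c (fun y => n y a) x * ℓ x a)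
        - (n x a * ℓ x a) * pd c (fun y => Y y d b) x
        + Y x c b * (pd d (fun y => n y a) x * ℓ x a)
        + (n x a * ℓ x a) * pd d (fun y => Y y c b) x
        - Y x d b * (ℓ x a * (∑ f, Gam0 γ ℓ P n x a c f * n x f))
        + Y x c b * (ℓ x a * (∑ f, Gam0 γ ℓ P n x a d f * n x f))
        - (n x a * ℓ x a) * (∑ f, Y x c f * Gam0 γ ℓ P n x f d b)
        + (n x a * ℓ x a) * (∑ f, Y x d f * Gam0 γ ℓ P n x f c b)
        + (n x a * ℓ x a) * (Y x d b * (∑ f, n x f * Y x c f))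
        - (n x a * ℓ x a) * (Y x c b * (∑ f, n x f * Y x d f)) := fun a => by
    rw [S1 hU hd hYsm hx a b c d]; ring
  rw [Finset.sum_congr rfl fun a _ => e1 a]
  simp only [Finset.sum_add_distrib, Finset.sum_sub_distrib]
  simp only [← Finset.mul_sum, ← Finset.sum_mul]
  rw [swap_sum (ℓ x) (fun a' f' => Gam0 γ ℓ P n x a' c f') (n x),
    swap_sum (ℓ x) (fun a' f' => Gam0 γ ℓ P n x a' d f') (n x)]
  rw [Finset.sum_congr rfl fun f _ => congrArg (· * n x f) (lGam0 hU hd hx c f),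
    Finset.sum_congr rfl fun f _ => congrArg (· * n x f) (lGam0 hU hd hx d f)]
  have hW : ∀ c', (∑ f, (ℓ2 x * Uf γ ℓ n n2 x c' f
        + (pd c' (fun y => ℓ y f) x + pd f (fun y => ℓ y c') x) / 2) * n x f)
      = ℓ2 x * (∑ f, n x f * Uf γ ℓ n n2 x f c')
        + (∑ f, n x f * pd c' (fun y => ℓ y f) x) / 2
        + (∑ f, n x f * pd f (fun y => ℓ y c') x) / 2 := by
    intro c'
    rw [Finset.mul_sum, Finset.sum_div, Finset.sum_div, ← Finset.sum_add_distrib,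
      ← Finset.sum_add_distrib]
    exact Finset.sum_congr rfl fun f _ => by rw [Uf_symm hU hd hx c' f]; ring
  rw [hW c, hW d]
  have hg7 : ∀ c' d', (∑ f, Y x c' f * Gam0 γ ℓ P n x f d' b)
      = ∑ f, Gam0 γ ℓ P n x f d' b * Y x f c' := fun c' d' =>
    Finset.sum_congr rfl fun f _ => by rw [hYs x hx c' f]; ring
  have hg8 : ∀ c', (∑ f, n x f * Y x c' f) = ∑ f, n x f * Y x f c' := fun c' =>
    Finset.sum_congr rfl fun f _ => by rw [hYs x hx c' f]
  rw [hg7 c d, hg7 d c, hg8 c, hg8 d, hμ]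
  ring

end Aux6
end HypData

namespace HypData

section Aux7
variable {m : ℕ} {U : Set (Fin m → ℝ)} {γ : Ten m} {ℓ : Vec m} {ℓ2 : Sc m}
  {P : Ten m} {n : Vec m} {n2 : Sc m} {Y : Ten m} {x : Fin m → ℝ}

/-- Contraction of the curvature of `Γ̄` with `γ`. -/
theorem C2 (hU : IsOpen U) (hd : MetricData U γ ℓ ℓ2 P n n2) (hYsm : SmTen U Y)
    (hYs : ∀ y ∈ U, ∀ a b, Y y a b = Y y b a) (hx : x ∈ U) (a b c d : Fin m) :
    (∑ g, γ x a g * curv (GamB γ ℓ P n Y) x g b c d)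
      = (∑ g, γ x a g * curv (Gam0 γ ℓ P n) x g b c d)
        - Y x d b * (∑ g, γ x a g * pd c (fun y => n y g) x)
        + Y x c b * (∑ g, γ x a g * pd d (fun y => n y g) x)
        + (n2 x * ℓ x a) * pd c (fun y => Y y d b) x
        - (n2 x * ℓ x a) * pd d (fun y => Y y c b) x
        - Y x d b * ((∑ f, n x f * pd c (fun y => γ y f a) x) / 2
            + (∑ f, n x f * pd f (fun y => γ y c a) x) / 2
            - (∑ f, n x f * pd a (fun y => γ y c f) x) / 2
            + ℓ x a * (∑ f, n x f * Uf γ ℓ n n2 x f c))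
        + Y x c b * ((∑ f, n x f * pd d (fun y => γ y f a) x) / 2
            + (∑ f, n x f * pd f (fun y => γ y d a) x) / 2
            - (∑ f, n x f * pd a (fun y => γ y d f) x) / 2
            + ℓ x a * (∑ f, n x f * Uf γ ℓ n n2 x f d))
        + (n2 x * ℓ x a) * (∑ f, Gam0 γ ℓ P n x f d b * Y x f c)
        - (n2 x * ℓ x a) * (∑ f, Gam0 γ ℓ P n x f c b * Y x f d)
        - (n2 x * ℓ x a) * (Y x d b * (∑ f, n x f * Y x f c)
            - Y x c b * (∑ f, n x f * Y x f d)) := by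
  have hγn : (∑ g, γ x a g * n x g) = -(n2 x * ℓ x a) := by
    have := (hd.2.2.2.2.2.2.2.2 x hx).2.2.2 a; linarith
  have e1 : ∀ g, γ x a g * curv (GamB γ ℓ P n Y) x g b c d
      = γ x a g * curv (Gam0 γ ℓ P n) x g b c d
        - Y x d b * (γ x a g * pd c (fun y => n y g) x)
        - (γ x a g * n x g) * pd c (fun y => Y y d b) x
        + Y x c b * (γ x a g * pd d (fun y => n y g) x)
        + (γ x a g * n x g) * pd d (fun y => Y y c b) x
        - Y x d b * (γ x a g * (∑ f, Gam0 γ ℓ P n x g c f * n x f))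
        + Y x c b * (γ x a g * (∑ f, Gam0 γ ℓ P n x g d f * n x f))
        - (γ x a g * n x g) * (∑ f, Y x c f * Gam0 γ ℓ P n x f d b)
        + (γ x a g * n x g) * (∑ f, Y x d f * Gam0 γ ℓ P n x f c b)
        + (γ x a g * n x g) * (Y x d b * (∑ f, n x f * Y x c f))
        - (γ x a g * n x g) * (Y x c b * (∑ f, n x f * Y x d f)) := fun g => by
    rw [S1 hU hd hYsm hx g b c d]; ring
  rw [Finset.sum_congr rfl fun g _ => e1 g]
  simp only [Finset.sum_add_distrib, Finset.sum_sub_distrib]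
  simp only [← Finset.mul_sum, ← Finset.sum_mul]
  rw [swap_sum (γ x a) (fun g' f' => Gam0 γ ℓ P n x g' c f') (n x),
    swap_sum (γ x a) (fun g' f' => Gam0 γ ℓ P n x g' d f') (n x)]
  rw [Finset.sum_congr rfl fun f _ => congrArg (· * n x f) (gGam0 hU hd hx a c f),
    Finset.sum_congr rfl fun f _ => congrArg (· * n x f) (gGam0 hU hd hx a d f)]
  have hW2 : ∀ c', (∑ f, ((pd c' (fun y => γ y f a) x + pd f (fun y => γ y c' a) x
        - pd a (fun y => γ y c' f) x) / 2 + ℓ x a * Uf γ ℓ n n2 x c' f) * n x f)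
      = (∑ f, n x f * pd c' (fun y => γ y f a) x) / 2
        + (∑ f, n x f * pd f (fun y => γ y c' a) x) / 2
        - (∑ f, n x f * pd a (fun y => γ y c' f) x) / 2
        + ℓ x a * (∑ f, n x f * Uf γ ℓ n n2 x f c') := by
    intro c'
    rw [Finset.mul_sum, Finset.sum_div, Finset.sum_div, Finset.sum_div,
      ← Finset.sum_add_distrib, ← Finset.sum_sub_distrib, ← Finset.sum_add_distrib]
    exact Finset.sum_congr rfl fun f _ => by rw [Uf_symm hU hd hx c' f]; ring
  rw [hW2 c, hW2 d]
  have hg7 : ∀ c' d', (∑ f, Y x c' f * Gam0 γ ℓ P n x f d' b)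
      = ∑ f, Gam0 γ ℓ P n x f d' b * Y x f c' := fun c' d' =>
    Finset.sum_congr rfl fun f _ => by rw [hYs x hx c' f]; ring
  have hg8 : ∀ c', (∑ f, n x f * Y x c' f) = ∑ f, n x f * Y x f c' := fun c' =>
    Finset.sum_congr rfl fun f _ => by rw [hYs x hx c' f]
  rw [hg7 c d, hg7 d c, hg8 c, hg8 d, hγn]
  ring

end Aux7
end HypData

namespace HypData

section Aux8
variable {m : ℕ} {U : Set (Fin m → ℝ)} {γ : Ten m} {ℓ : Vec m} {ℓ2 : Sc m}
  {P : Ten m} {n : Vec m} {n2 : Sc m} {Y : Ten m} {x : Fin m → ℝ}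

theorem R3s (hU : IsOpen U) (hd : MetricData U γ ℓ ℓ2 P n n2) (hx : x ∈ U) (e : Fin m) :
    (∑ f, pd e (fun y => n y f) x * ℓ x f)
      = -(∑ f, n x f * pd e (fun y => ℓ y f) x) - pd e n2 x * ℓ2 x - n2 x * pd e ℓ2 x := by
  have h := R3' hU hd hx e
  rw [Finset.sum_add_distrib] at h
  linarith

theorem R4s (hU : IsOpen U) (hd : MetricData U γ ℓ ℓ2 P n n2) (hx : x ∈ U) (e a : Fin m) :
    (∑ g, γ x a g * pd e (fun y => n y g) x)
      = -(∑ g, pd e (fun y => γ y a g) x * n x g) - pd e n2 x * ℓ x a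
        - n2 x * pd e (fun y => ℓ y a) x := by
  have h := R4' hU hd hx e a
  rw [Finset.sum_add_distrib] at h
  linarith

/-- `∇̄_c ℓ_a + ℓ² K_{ca} = F_{ca} + Y_{ca}`. -/
theorem LemFY (hU : IsOpen U) (hd : MetricData U γ ℓ ℓ2 P n n2)
    (hx : x ∈ U) (c a : Fin m) :
    covD1 (GamB γ ℓ P n Y) ℓ x c a + ℓ2 x * Kf γ ℓ n n2 Y x c a
      = Ff ℓ x c a + Y x c a := by
  have hμ : (∑ f, n x f * ℓ x f) = 1 - n2 x * ℓ2 x := by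
    have := (hd.2.2.2.2.2.2.2.2 x hx).2.2.1; linarith
  have hbr : (∑ f, GamB γ ℓ P n Y x f c a * ℓ x f)
      = (∑ f, ℓ x f * Gam0 γ ℓ P n x f c a) - (∑ f, n x f * ℓ x f) * Y x c a := by
    simp only [GamB]
    simp_rw [sub_mul]
    rw [Finset.sum_sub_distrib, Finset.sum_mul]
    congr 1
    · exact Finset.sum_congr rfl fun f _ => mul_comm _ _
    · exact Finset.sum_congr rfl fun f _ => by ring
  simp only [covD1, Kf, Ff]
  rw [hbr, lGam0 hU hd hx c a, hμ]
  ring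

/-- Expansion of `∇̄_d K_{bc}`. -/
theorem LemDK (hU : IsOpen U) (hd : MetricData U γ ℓ ℓ2 P n n2) (hYsm : SmTen U Y)
    (hx : x ∈ U) (d b c : Fin m) :
    covD2 (GamB γ ℓ P n Y) (Kf γ ℓ n n2 Y) x d b c
      = pd d n2 x * Y x b c + n2 x * pd d (fun y => Y y b c) x
        + pd d (fun y => Uf γ ℓ n n2 y b c) x
        - (∑ f, Gam0 γ ℓ P n x f d b * Kf γ ℓ n n2 Y x f c)
        - (∑ f, Gam0 γ ℓ P n x f d c * Kf γ ℓ n n2 Y x b f)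
        + Y x d b * (∑ f, n x f * Kf γ ℓ n n2 Y x f c)
        + Y x d c * (∑ f, n x f * Kf γ ℓ n n2 Y x b f) := by
  obtain ⟨hγ, hℓ, hℓ2, hP, hn, hn2, hγs, hPs, hinv⟩ := id hd
  have dY : ∀ a' b', DifferentiableAt ℝ (fun y => Y y a' b') x :=
    fun a' b' => SmSc.dAt hU (hYsm a' b') hx
  have dn2 : DifferentiableAt ℝ n2 x := SmSc.dAt hU hn2 hx
  have dUf : DifferentiableAt ℝ (fun y => Uf γ ℓ n n2 y b c) x :=
    SmSc.dAt hU (smUf hU hγ hℓ hn hn2 b c) hx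
  have hpdK : pd d (fun y => Kf γ ℓ n n2 Y y b c) x
      = pd d n2 x * Y x b c + n2 x * pd d (fun y => Y y b c) x
        + pd d (fun y => Uf γ ℓ n n2 y b c) x := by
    have h1 : (fun y => Kf γ ℓ n n2 Y y b c)
        = fun y => n2 y * Y y b c + Uf γ ℓ n n2 y b c := rfl
    rw [h1, pd_add (dn2.fun_mul (dY b c)) dUf, pd_mul dn2 (dY b c)]
  have hbr : ∀ (b' : Fin m) (T : Fin m → ℝ),
      (∑ f, GamB γ ℓ P n Y x f d b' * T f)
        = (∑ f, Gam0 γ ℓ P n x f d b' * T f) - Y x d b' * (∑ f, n x f * T f) := by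
    intro b' T
    simp only [GamB]
    simp_rw [sub_mul]
    rw [Finset.sum_sub_distrib, Finset.mul_sum]
    congr 1
    exact Finset.sum_congr rfl fun f _ => by ring
  simp only [covD2]
  rw [hpdK, hbr b (fun f => Kf γ ℓ n n2 Y x f c), hbr c (fun f => Kf γ ℓ n n2 Y x b f)]
  ring

end Aux8
end HypData

namespace GaussCodazzi

open HypData

variable {m : ℕ}

/-- The Gauss-Codazzi quantity `(I)_{bcd}` (= `R(ℓ,e_b,e_c,e_d)` for embedded data). -/
def Idef (γ : Ten m) (ℓ : Vec m) (ℓ2 : Sc m) (P : Ten m) (n : Vec m) (n2 : Sc m)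
    (Y : Ten m) (x : Fin m → ℝ) (b c d : Fin m) : ℝ :=
  (∑ a, ℓ x a * curv (GamB γ ℓ P n Y) x a b c d)
  + ℓ2 x * (covD2 (GamB γ ℓ P n Y) (Kf γ ℓ n n2 Y) x d b c
      - covD2 (GamB γ ℓ P n Y) (Kf γ ℓ n n2 Y) x c b d)
  + Kf γ ℓ n n2 Y x b c * pd d ℓ2 x / 2
  - Kf γ ℓ n n2 Y x b d * pd c ℓ2 x / 2

/-- The Gauss-Codazzi quantity `(II)_{abcd}` (= `R(e_a,e_b,e_c,e_d)` for embedded data). -/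
def IIdef (γ : Ten m) (ℓ : Vec m) (ℓ2 : Sc m) (P : Ten m) (n : Vec m) (n2 : Sc m)
    (Y : Ten m) (x : Fin m → ℝ) (a b c d : Fin m) : ℝ :=
  (∑ f, γ x a f * curv (GamB γ ℓ P n Y) x f b c d)
  - Kf γ ℓ n n2 Y x b d * (covD1 (GamB γ ℓ P n Y) ℓ x c a
      + ℓ2 x * Kf γ ℓ n n2 Y x c a)
  + Kf γ ℓ n n2 Y x b c * (covD1 (GamB γ ℓ P n Y) ℓ x d a
      + ℓ2 x * Kf γ ℓ n n2 Y x d a)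
  - ℓ x a * (covD2 (GamB γ ℓ P n Y) (Kf γ ℓ n n2 Y) x c b d
      - covD2 (GamB γ ℓ P n Y) (Kf γ ℓ n n2 Y) x d b c)

/-- Proposition 5 of the paper (Remark 7), the Gauss-Codazzi
quantities `(I)` and `(II)` rewritten in terms of the metric hypersurface
connection `∇̊`. -/
theorem statement13 (m : ℕ) (hm : 1 ≤ m) (U : Set (Fin m → ℝ)) (hU : IsOpen U)
    (γ : Ten m) (ℓ : Vec m) (ℓ2 : Sc m) (P : Ten m) (n : Vec m) (n2 : Sc m)
    (hdata : MetricData U γ ℓ ℓ2 P n n2)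
    (Y : Ten m) (hYsm : SmTen U Y) (hYs : ∀ x ∈ U, ∀ a b, Y x a b = Y x b a) :
    -- (1)
    ((∀ x ∈ U, ∀ b c d,
      Idef γ ℓ ℓ2 P n n2 Y x b c d
        = (∑ a, ℓ x a * curv (Gam0 γ ℓ P n) x a b c d)
          + covD2 (Gam0 γ ℓ P n) Y x d b c - covD2 (Gam0 γ ℓ P n) Y x c b d
          + ℓ2 x * (covD2 (Gam0 γ ℓ P n) (Uf γ ℓ n n2) x d b c
            - covD2 (Gam0 γ ℓ P n) (Uf γ ℓ n n2) x c b d)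
          + (Uf γ ℓ n n2 x b c * pd d ℓ2 x - Uf γ ℓ n n2 x b d * pd c ℓ2 x) / 2
          + Y x b d * ((∑ f, (Ff ℓ x c f + Y x c f) * n x f)
              + n2 x * pd c ℓ2 x / 2)
          - Y x b c * ((∑ f, (Ff ℓ x d f + Y x d f) * n x f)
              + n2 x * pd d ℓ2 x / 2))
    -- (2)
    ∧ (∀ x ∈ U, ∀ a b c d,
      IIdef γ ℓ ℓ2 P n n2 Y x a b c d
        = (∑ f, γ x a f * curv (Gam0 γ ℓ P n) x f b c d)
          + ℓ x a * (covD2 (Gam0 γ ℓ P n) (Uf γ ℓ n n2) x d b c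
            - covD2 (Gam0 γ ℓ P n) (Uf γ ℓ n n2) x c b d)
          + Y x b c * Uf γ ℓ n n2 x d a - Y x b d * Uf γ ℓ n n2 x c a
          + Uf γ ℓ n n2 x b c * Y x d a - Uf γ ℓ n n2 x b d * Y x c a
          + n2 x * (Y x b c * Y x d a - Y x b d * Y x c a)
          + Uf γ ℓ n n2 x b c * Ff ℓ x d a
          - Uf γ ℓ n n2 x b d * Ff ℓ x c a)) := by
  constructor
  · intro x hx b c d
    simp only [Idef]
    rw [C1 hU hdata hYsm hYs hx b c d, LemDK hU hdata hYsm hx d b c,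
      LemDK hU hdata hYsm hx c b d]
    simp only [Kf]
    have s1 : ∀ d' c', (∑ f, Gam0 γ ℓ P n x f d' b * (n2 x * Y x f c' + Uf γ ℓ n n2 x f c'))
        = n2 x * (∑ f, Gam0 γ ℓ P n x f d' b * Y x f c')
          + ∑ f, Gam0 γ ℓ P n x f d' b * Uf γ ℓ n n2 x f c' :=
      fun d' c' => split_sum _ _ _ _
    have s2 : ∀ d' c', (∑ f, Gam0 γ ℓ P n x f d' c' * (n2 x * Y x b f + Uf γ ℓ n n2 x b f))
        = n2 x * (∑ f, Gam0 γ ℓ P n x f d' c' * Y x b f)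
          + ∑ f, Gam0 γ ℓ P n x f d' c' * Uf γ ℓ n n2 x b f :=
      fun d' c' => split_sum _ _ _ _
    have s3 : ∀ c', (∑ f, n x f * (n2 x * Y x f c' + Uf γ ℓ n n2 x f c'))
        = n2 x * (∑ f, n x f * Y x f c') + ∑ f, n x f * Uf γ ℓ n n2 x f c' :=
      fun c' => split_sum _ _ _ _
    have s4 : (∑ f, n x f * (n2 x * Y x b f + Uf γ ℓ n n2 x b f))
        = n2 x * (∑ f, n x f * Y x b f) + ∑ f, n x f * Uf γ ℓ n n2 x b f :=
      split_sum _ _ _ _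
    rw [s1 d c, s2 d c, s3 c, s4, s1 c d, s2 c d, s3 d]
    have g1 : (∑ f, Gam0 γ ℓ P n x f d c * Y x b f)
        = ∑ f, Gam0 γ ℓ P n x f c d * Y x b f :=
      Finset.sum_congr rfl fun f _ => by rw [Gam0_symm hU hdata hx f d c]
    rw [g1]
    have hF : ∀ c', (∑ f, (Ff ℓ x c' f + Y x c' f) * n x f)
        = (∑ f, n x f * pd c' (fun y => ℓ y f) x) / 2
          - (∑ f, n x f * pd f (fun y => ℓ y c') x) / 2
          + (∑ f, n x f * Y x f c') := by
      intro c'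
      rw [Finset.sum_div, Finset.sum_div, ← Finset.sum_sub_distrib, ← Finset.sum_add_distrib]
      exact Finset.sum_congr rfl fun f _ => by
        simp only [Ff]; rw [hYs x hx c' f]; ring
    rw [hF c, hF d]
    rw [pd_symm hU hYs hx c d b, pd_symm hU hYs hx d c b,
      show Y x d b = Y x b d from hYs x hx d b,
      show Y x c b = Y x b c from hYs x hx c b,
      show Y x d c = Y x c d from hYs x hx d c]
    simp only [covD2]
    have hR3c := R3s hU hdata hx c
    have hR3d := R3s hU hdata hx d
    linear_combination (-(Y x b d)) * hR3c + (Y x b c) * hR3d + g1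
  · intro x hx a b c d
    obtain ⟨hγ, hℓ, hℓ2, hP, hn, hn2, hγs, hPs, hinv⟩ := id hdata
    simp only [IIdef]
    rw [C2 hU hdata hYsm hYs hx a b c d, LemFY hU hdata hx c a, LemFY hU hdata hx d a,
      LemDK hU hdata hYsm hx c b d, LemDK hU hdata hYsm hx d b c]
    simp only [Kf]
    have s1 : ∀ d' c', (∑ f, Gam0 γ ℓ P n x f d' b * (n2 x * Y x f c' + Uf γ ℓ n n2 x f c'))
        = n2 x * (∑ f, Gam0 γ ℓ P n x f d' b * Y x f c')
          + ∑ f, Gam0 γ ℓ P n x f d' b * Uf γ ℓ n n2 x f c' :=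
      fun d' c' => split_sum _ _ _ _
    have s2 : ∀ d' c', (∑ f, Gam0 γ ℓ P n x f d' c' * (n2 x * Y x b f + Uf γ ℓ n n2 x b f))
        = n2 x * (∑ f, Gam0 γ ℓ P n x f d' c' * Y x b f)
          + ∑ f, Gam0 γ ℓ P n x f d' c' * Uf γ ℓ n n2 x b f :=
      fun d' c' => split_sum _ _ _ _
    have s3 : ∀ c', (∑ f, n x f * (n2 x * Y x f c' + Uf γ ℓ n n2 x f c'))
        = n2 x * (∑ f, n x f * Y x f c') + ∑ f, n x f * Uf γ ℓ n n2 x f c' :=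
      fun c' => split_sum _ _ _ _
    have s4 : (∑ f, n x f * (n2 x * Y x b f + Uf γ ℓ n n2 x b f))
        = n2 x * (∑ f, n x f * Y x b f) + ∑ f, n x f * Uf γ ℓ n n2 x b f :=
      split_sum _ _ _ _
    rw [s1 d c, s2 d c, s3 c, s4, s1 c d, s2 c d, s3 d]
    have g1 : (∑ f, Gam0 γ ℓ P n x f d c * Y x b f)
        = ∑ f, Gam0 γ ℓ P n x f c d * Y x b f :=
      Finset.sum_congr rfl fun f _ => by rw [Gam0_symm hU hdata hx f d c]
    rw [g1, R4s hU hdata hx c a, R4s hU hdata hx d a]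
    have hw : ∀ e, (∑ g, pd e (fun y => γ y a g) x * n x g)
        = ∑ f, n x f * pd e (fun y => γ y f a) x := fun e =>
      Finset.sum_congr rfl fun g _ => by rw [pd_symm hU hγs hx e a g]; ring
    rw [hw c, hw d]
    have hUx : ∀ c', Uf γ ℓ n n2 x c' a
        = -(((∑ f, n x f * pd c' (fun y => γ y f a) x)
            + (∑ f, n x f * pd a (fun y => γ y c' f) x)
            - (∑ f, n x f * pd f (fun y => γ y c' a) x)
            + n2 x * (pd c' (fun y => ℓ y a) x + pd a (fun y => ℓ y c') x)) / 2) := by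
      intro c'
      rw [Uexp hU hdata hx c' a]
      have hb : (∑ f, n x f * (pd c' (fun y => γ y a f) x + pd a (fun y => γ y c' f) x
            - pd f (fun y => γ y c' a) x))
          = (∑ f, n x f * pd c' (fun y => γ y f a) x)
            + (∑ f, n x f * pd a (fun y => γ y c' f) x)
            - (∑ f, n x f * pd f (fun y => γ y c' a) x) := by
        rw [← Finset.sum_add_distrib, ← Finset.sum_sub_distrib]
        exact Finset.sum_congr rfl fun f _ => by rw [pd_symm hU hγs hx c' a f]; ring
      rw [hb]
    rw [hUx c, hUx d]
    rw [pd_symm hU hYs hx c d b, pd_symm hU hYs hx d c b,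
      show Y x d b = Y x b d from hYs x hx d b,
      show Y x c b = Y x b c from hYs x hx c b,
      show Y x d c = Y x c d from hYs x hx d c]
    simp only [covD2, Ff]
    ring




end GaussCodazzi
end
end

section
/- Let (γ, ℓ, ℓ⁽²⁾, Y) be coordinate hypersurface data on U with inverse blocks (P, n, n⁽²⁾), derived fields F, U, K, Γ̄, curvature R̄ of Γ̄, and the fields (I)_{bcd}, (II)_{abcd} as defined below. Then the following two identities hold on U: (1) −2(I)_{bcd}P^{bd}n^c − (II)_{abcd}P^{ac}P^{bd} = −P^{bd}R̄^c_{bcd} − P^{bd}n^c(ℓ_aR̄^a_{bcd} + ∇̄_d(ℓ⁽²⁾K_{bc}) − ∇̄_c(ℓ⁽²⁾K_{bd})) − P^{ac}P^{bd}(K_{bc}Y_{da} − K_{bd}Y_{ac}); (2) (I)_{bcd}(n⁽²⁾P^{bd} − n^bn^d) + (II)_{abcd}n^aP^{bd} = (P^{bd} − ℓ⁽²⁾n^bn^d)(∇̄_dK_{bc} − ∇̄_cK_{bd}) + ½(n⁽²⁾P^{bd} − n^bn^d)(K_{bc}∂_dℓ⁽²⁾ − K_{bd}∂_cℓ⁽²⁾)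 + P^{bd}n^a[K_{bc}(Y_{da} + F_{da}) − K_{bd}(Y_{ca} + F_{ca})] − n^bn^dℓ_aR̄^a_{bcd}. (For embedded data the left-hand sides equal 2G(n,ℓ) and −G(n,e_c), the normal–transversal and normal–tangential components of the ambient Einstein tensor; these are the constraint equations for a general hypersurface written with the connection Γ̄.) -/
open scoped BigOperators

noncomputable section

section Helpers

open HypData

variable {m : ℕ}

/-- Partial derivatives of functions agreeing on an open set agree. -/
lemma GC_pd_congr {U : Set (Fin m → ℝ)} (hU : IsOpen U) {f g : Sc m}
    (h : ∀ y ∈ U, f y = g y) {x : Fin m → ℝ} (hx : x ∈ U) (a : Fin m) :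
    pd a f x = pd a g x := by
  unfold pd
  rw [Filter.EventuallyEq.fderiv_eq (Filter.eventuallyEq_of_mem (hU.mem_nhds hx) h)]

lemma GC_pd_zero {U : Set (Fin m → ℝ)} (hU : IsOpen U) {f : Sc m}
    (h : ∀ y ∈ U, f y = 0) {x : Fin m → ℝ} (hx : x ∈ U) (a : Fin m) :
    pd a f x = 0 := by
  rw [GC_pd_congr hU h hx a]; simp [pd]

lemma GC_pd_add {f g : Sc m} {x : Fin m → ℝ} (hf : DifferentiableAt ℝ f x)
    (hg : DifferentiableAt ℝ g x) (a : Fin m) :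
    pd a (fun y => f y + g y) x = pd a f x + pd a g x := by
  unfold pd; rw [fderiv_fun_add hf hg]; simp

lemma GC_pd_mul {f g : Sc m} {x : Fin m → ℝ} (hf : DifferentiableAt ℝ f x)
    (hg : DifferentiableAt ℝ g x) (a : Fin m) :
    pd a (fun y => f y * g y) x = f x * pd a g x + g x * pd a f x := by
  unfold pd; rw [fderiv_fun_mul hf hg]; simp

lemma GC_pd_sum {ι : Type*} {s : Finset ι} {f : ι → Sc m} {x : Fin m → ℝ}
    (hf : ∀ i ∈ s, DifferentiableAt ℝ (f i) x) (a : Fin m) :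
    pd a (fun y => ∑ i ∈ s, f i y) x = ∑ i ∈ s, pd a (f i) x := by
  unfold pd; rw [fderiv_fun_sum hf]; simp

lemma GC_diffAt {U : Set (Fin m → ℝ)} (hU : IsOpen U) {f : Sc m}
    (hf : ContDiffOn ℝ (⊤ : ℕ∞) f U) {x : Fin m → ℝ} (hx : x ∈ U) :
    DifferentiableAt ℝ f x :=
  (hf.contDiffAt (hU.mem_nhds hx)).differentiableAt (by simp)

lemma GC_diffAt_pd {U : Set (Fin m → ℝ)} (hU : IsOpen U) {f : Sc m}
    (hf : ContDiffOn ℝ (⊤ : ℕ∞) f U) {x : Fin m → ℝ} (hx : x ∈ U) (a : Fin m) :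
    DifferentiableAt ℝ (fun y => pd a f y) x := by
  have h1 : ContDiffAt ℝ (⊤ : ℕ∞) f x := hf.contDiffAt (hU.mem_nhds hx)
  have h2 : ContDiffAt ℝ (1 : ℕ∞) (fderiv ℝ f) x :=
    h1.fderiv_right (by exact_mod_cast le_top)
  exact (h2.clm_apply contDiffAt_const).differentiableAt (by simp)

lemma GC_sum_comm3 {α β γ : Type*} [Fintype α] [Fintype β] [Fintype γ]
    (f : α → β → γ → ℝ) :
    ∑ a, ∑ b, ∑ c, f a b c = ∑ b, ∑ c, ∑ a, f a b c := by
  rw [Finset.sum_comm]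
  exact Finset.sum_congr rfl fun b _ => Finset.sum_comm

lemma GC_sum_comm4 {α β γ δ : Type*} [Fintype α] [Fintype β] [Fintype γ] [Fintype δ]
    (f : α → β → γ → δ → ℝ) :
    ∑ a, ∑ b, ∑ c, ∑ d, f a b c d = ∑ b, ∑ c, ∑ d, ∑ a, f a b c d := by
  rw [Finset.sum_comm]
  exact Finset.sum_congr rfl fun b _ => GC_sum_comm3 _

lemma GC_sum_sym_antisym {M A : Fin m → Fin m → ℝ} (hM : ∀ i j, M i j = M j i)
    (hA : ∀ i j, A i j = -A j i) : ∑ i, ∑ j, M i j * A i j = 0 := by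
  have h1 : (∑ i, ∑ j, M i j * A i j) = ∑ i, ∑ j, M j i * A j i := Finset.sum_comm
  have h2 : (∑ i, ∑ j, M j i * A j i) = -∑ i, ∑ j, M i j * A i j := by
    rw [← Finset.sum_neg_distrib]
    refine Finset.sum_congr rfl fun i _ => ?_
    rw [← Finset.sum_neg_distrib]
    refine Finset.sum_congr rfl fun j _ => ?_
    rw [hM j i, hA j i]; ring
  linarith [h1, h2.symm.trans h1.symm]

lemma GC_kd_contract (f : Fin m → ℝ) (c : Fin m) : ∑ i, kd c i * f i = f c := by
  simp [kd, ite_mul]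

lemma GC_sum2_add (f g : Fin m → Fin m → ℝ) :
    (∑ b, ∑ d, (f b d + g b d)) = (∑ b, ∑ d, f b d) + ∑ b, ∑ d, g b d := by
  simp [Finset.sum_add_distrib]

lemma GC_sum2_const_mul (c : ℝ) (f : Fin m → Fin m → ℝ) :
    (∑ b, ∑ d, c * f b d) = c * ∑ b, ∑ d, f b d := by
  simp [Finset.mul_sum]

lemma GC_sum3_add (f g : Fin m → Fin m → Fin m → ℝ) :
    (∑ a, ∑ b, ∑ d, (f a b d + g a b d))
      = (∑ a, ∑ b, ∑ d, f a b d) + ∑ a, ∑ b, ∑ d, g a b d := by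
  simp [Finset.sum_add_distrib]

lemma GC_sum3_const_mul (c : ℝ) (f : Fin m → Fin m → Fin m → ℝ) :
    (∑ a, ∑ b, ∑ d, c * f a b d) = c * ∑ a, ∑ b, ∑ d, f a b d := by
  simp [Finset.mul_sum]

lemma GC_sum4_add (f g : Fin m → Fin m → Fin m → Fin m → ℝ) :
    (∑ a, ∑ b, ∑ c, ∑ d, (f a b c d + g a b c d))
      = (∑ a, ∑ b, ∑ c, ∑ d, f a b c d) + ∑ a, ∑ b, ∑ c, ∑ d, g a b c d := by
  simp [Finset.sum_add_distrib]

end Helpers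


section Algebra

open HypData

variable {m : ℕ}

lemma GC_alg1 (P γ K Y F DL : Fin m → Fin m → ℝ) (ℓ n Dl2 : Fin m → ℝ) (ℓ2 : ℝ)
    (R : Fin m → Fin m → Fin m → Fin m → ℝ) (DK DLK : Fin m → Fin m → Fin m → ℝ)
    (I : Fin m → Fin m → Fin m → ℝ) (II : Fin m → Fin m → Fin m → Fin m → ℝ)
    (hPsym : ∀ a b, P a b = P b a)
    (hYsym : ∀ a b, Y a b = Y b a)
    (hKsym : ∀ a b, K a b = K b a)
    (hFanti : ∀ a b, F a b = -F b a)
    (hE1 : ∀ a b, (∑ c, P a c * γ c b) + n a * ℓ b = kd a b)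
    (hE2 : ∀ a, (∑ b, P a b * ℓ b) + ℓ2 * n a = 0)
    (hI : ∀ b c d, I b c d = (∑ a, ℓ a * R a b c d)
      + ℓ2 * (DK d b c - DK c b d) + K b c * Dl2 d / 2 - K b d * Dl2 c / 2)
    (hII : ∀ a b c d, II a b c d = (∑ f, γ a f * R f b c d)
      - K b d * (DL c a + ℓ2 * K c a) + K b c * (DL d a + ℓ2 * K d a)
      - ℓ a * (DK c b d - DK d b c))
    (hDL : ∀ c a, DL c a + ℓ2 * K c a = Y c a + F c a)
    (hDLK : ∀ d b c, DLK d b c = ℓ2 * DK d b c + K b c * Dl2 d) :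
    -2 * (∑ b, ∑ c, ∑ d, I b c d * P b d * n c)
      - (∑ a, ∑ b, ∑ c, ∑ d, II a b c d * P a c * P b d)
    = -(∑ b, ∑ c, ∑ d, P b d * R c b c d)
      - (∑ b, ∑ c, ∑ d, P b d * n c
          * ((∑ a, ℓ a * R a b c d) + DLK d b c - DLK c b d))
      - (∑ a, ∑ b, ∑ c, ∑ d, P a c * P b d
          * (K b c * Y d a - K b d * Y a c)) := by
  have hPγ : ∀ c f, (∑ a, P a c * γ a f) = kd c f - n c * ℓ f := by
    intro c f
    have h0 := hE1 c f
    have h' : (∑ e, P c e * γ e f) = ∑ a, P a c * γ a f :=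
      Finset.sum_congr rfl fun a _ => by rw [hPsym c a]
    linarith
  have hPℓ : ∀ c, (∑ a, ℓ a * P a c) = -(ℓ2 * n c) := by
    intro c
    have h0 := hE2 c
    have h' : (∑ b, P c b * ℓ b) = ∑ a, ℓ a * P a c :=
      Finset.sum_congr rfl fun a _ => by rw [hPsym c a]; ring
    linarith
  have f1 : (∑ b, ∑ c, ∑ d, I b c d * P b d * n c)
      = (∑ b, ∑ c, ∑ d, P b d * n c * (∑ a, ℓ a * R a b c d))
        + ℓ2 * (∑ b, ∑ c, ∑ d, P b d * n c * (DK d b c - DK c b d))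
        + (1 / 2 : ℝ) * (∑ b, ∑ c, ∑ d, P b d * n c
            * (K b c * Dl2 d - K b d * Dl2 c)) := by
    rw [show (∑ b, ∑ c, ∑ d, I b c d * P b d * n c)
        = ∑ b, ∑ c, ∑ d, (P b d * n c * (∑ a, ℓ a * R a b c d)
          + ℓ2 * (P b d * n c * (DK d b c - DK c b d))
          + (1 / 2 : ℝ) * (P b d * n c * (K b c * Dl2 d - K b d * Dl2 c)))
      from Finset.sum_congr rfl fun b _ => Finset.sum_congr rfl fun c _ =>
        Finset.sum_congr rfl fun d _ => by rw [hI]; ring]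
    simp only [GC_sum3_add, GC_sum3_const_mul]
  have f2 : (∑ a, ∑ b, ∑ c, ∑ d, II a b c d * P a c * P b d)
      = (∑ a, ∑ b, ∑ c, ∑ d, (∑ f, γ a f * R f b c d) * P a c * P b d)
        + (∑ a, ∑ b, ∑ c, ∑ d, P a c * P b d * (K b c * Y d a - K b d * Y c a))
        + (∑ a, ∑ b, ∑ c, ∑ d,
            ((P a c * (P b d * K b c)) * F d a
              + (-1 : ℝ) * ((P a c * F c a) * (P b d * K b d))))
        + (∑ a, ∑ b, ∑ c, ∑ d,
            (ℓ a * P a c) * (P b d * (DK d b c - DK c b d))) := by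
    rw [show (∑ a, ∑ b, ∑ c, ∑ d, II a b c d * P a c * P b d)
        = ∑ a, ∑ b, ∑ c, ∑ d, ((∑ f, γ a f * R f b c d) * P a c * P b d
          + P a c * P b d * (K b c * Y d a - K b d * Y c a)
          + ((P a c * (P b d * K b c)) * F d a
              + (-1 : ℝ) * ((P a c * F c a) * (P b d * K b d)))
          + (ℓ a * P a c) * (P b d * (DK d b c - DK c b d)))
      from Finset.sum_congr rfl fun a _ => Finset.sum_congr rfl fun b _ =>
        Finset.sum_congr rfl fun c _ => Finset.sum_congr rfl fun d _ => by
          rw [hII, hDL c a, hDL d a]; ring]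
    simp only [GC_sum4_add]
  have f3 : (∑ a, ∑ b, ∑ c, ∑ d, (∑ f, γ a f * R f b c d) * P a c * P b d)
      = (∑ b, ∑ c, ∑ d, P b d * R c b c d)
        + (-1 : ℝ) * (∑ b, ∑ c, ∑ d, P b d * n c * (∑ a, ℓ a * R a b c d)) := by
    rw [GC_sum_comm4]
    rw [show (∑ b, ∑ c, ∑ d, ∑ a, (∑ f, γ a f * R f b c d) * P a c * P b d)
        = ∑ b, ∑ c, ∑ d, (P b d * R c b c d
            + (-1 : ℝ) * (P b d * n c * (∑ f, ℓ f * R f b c d))) from ?_]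
    · simp only [GC_sum3_add, GC_sum3_const_mul]
    refine Finset.sum_congr rfl fun b _ => Finset.sum_congr rfl fun c _ =>
      Finset.sum_congr rfl fun d _ => ?_
    calc (∑ a, (∑ f, γ a f * R f b c d) * P a c * P b d)
        = ∑ a, ∑ f, (P a c * γ a f) * (R f b c d * P b d) := by
          refine Finset.sum_congr rfl fun a _ => ?_
          rw [Finset.sum_mul, Finset.sum_mul]
          exact Finset.sum_congr rfl fun f _ => by ring
      _ = ∑ f, ∑ a, (P a c * γ a f) * (R f b c d * P b d) := Finset.sum_comm
      _ = ∑ f, (kd c f - n c * ℓ f) * (R f b c d * P b d) := by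
          refine Finset.sum_congr rfl fun f _ => ?_
          rw [← Finset.sum_mul, hPγ c f]
      _ = ∑ f, (kd c f * (R f b c d * P b d)
            + (-(P b d * n c)) * (ℓ f * R f b c d)) := by
          exact Finset.sum_congr rfl fun f _ => by ring
      _ = (∑ f, kd c f * (R f b c d * P b d))
            + ∑ f, (-(P b d * n c)) * (ℓ f * R f b c d) := Finset.sum_add_distrib
      _ = P b d * R c b c d + (-1 : ℝ) * (P b d * n c * (∑ f, ℓ f * R f b c d)) := by
          rw [GC_kd_contract (fun f => R f b c d * P b d) c, ← Finset.mul_sum]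
          ring
  have f4 : (∑ a, ∑ b, ∑ c, ∑ d,
        ((P a c * (P b d * K b c)) * F d a
          + (-1 : ℝ) * ((P a c * F c a) * (P b d * K b d)))) = 0 := by
    rw [GC_sum4_add]
    have hF1 : (∑ a, ∑ b, ∑ c, ∑ d, (P a c * (P b d * K b c)) * F d a) = 0 := by
      have step : ∀ a : Fin m, (∑ b, ∑ c, ∑ d, (P a c * (P b d * K b c)) * F d a)
          = ∑ d, (∑ b, ∑ c, P a c * (P b d * K b c)) * F d a := by
        intro a
        rw [← GC_sum_comm3 (fun d b c => (P a c * (P b d * K b c)) * F d a)]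
        refine Finset.sum_congr rfl fun d _ => ?_
        rw [Finset.sum_mul]
        refine Finset.sum_congr rfl fun b _ => ?_
        rw [Finset.sum_mul]
      rw [Finset.sum_congr rfl fun a _ => step a]
      exact GC_sum_sym_antisym
        (M := fun a d => ∑ b, ∑ c, P a c * (P b d * K b c))
        (A := fun a d => F d a)
        (fun a d => by
          show (∑ b, ∑ c, P a c * (P b d * K b c))
            = ∑ b, ∑ c, P d c * (P b a * K b c)
          calc (∑ b, ∑ c, P a c * (P b d * K b c))
              = ∑ c, ∑ b, P a c * (P b d * K b c) := Finset.sum_comm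
            _ = ∑ b, ∑ c, P d c * (P b a * K b c) :=
              Finset.sum_congr rfl fun u _ => Finset.sum_congr rfl fun v _ => by
                rw [hPsym a u, hPsym v d, hKsym v u]; ring)
        (fun a d => by show F d a = -F a d; rw [hFanti d a])
    have hPF : (∑ a, ∑ c, P a c * F c a) = 0 :=
      GC_sum_sym_antisym (M := P) (A := fun i j => F j i) hPsym
        (fun i j => by show F j i = -F i j; rw [hFanti j i])
    have hF2 : (∑ a, ∑ b, ∑ c, ∑ d,
        (-1 : ℝ) * ((P a c * F c a) * (P b d * K b d))) = 0 := by
      have step : (∑ a, ∑ b, ∑ c, ∑ d,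
          (-1 : ℝ) * ((P a c * F c a) * (P b d * K b d)))
          = ∑ a, ∑ b, (-1 : ℝ)
              * ((∑ c, P a c * F c a) * (∑ d, P b d * K b d)) := by
        refine Finset.sum_congr rfl fun a _ => Finset.sum_congr rfl fun b _ => ?_
        rw [Finset.sum_mul_sum]
        exact GC_sum2_const_mul _ _
      rw [step]
      have step2 : (∑ a, ∑ b, (-1 : ℝ)
            * ((∑ c, P a c * F c a) * (∑ d, P b d * K b d)))
          = (-1 : ℝ) * ∑ a, ∑ b,
              ((∑ c, P a c * F c a) * (∑ d, P b d * K b d)) :=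
        GC_sum2_const_mul _ _
      rw [step2, ← Finset.sum_mul_sum, hPF]
      ring
    rw [hF1, hF2, add_zero]
  have f5 : (∑ a, ∑ b, ∑ c, ∑ d, (ℓ a * P a c) * (P b d * (DK d b c - DK c b d)))
      = (-ℓ2) * (∑ b, ∑ c, ∑ d, P b d * n c * (DK d b c - DK c b d)) := by
    rw [GC_sum_comm4]
    rw [show (∑ b, ∑ c, ∑ d, ∑ a, (ℓ a * P a c) * (P b d * (DK d b c - DK c b d)))
        = ∑ b, ∑ c, ∑ d, (-ℓ2) * (P b d * n c * (DK d b c - DK c b d)) from ?_]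
    · exact GC_sum3_const_mul _ _
    refine Finset.sum_congr rfl fun b _ => Finset.sum_congr rfl fun c _ =>
      Finset.sum_congr rfl fun d _ => ?_
    rw [← Finset.sum_mul, hPℓ c]; ring
  have f7 : (∑ a, ∑ b, ∑ c, ∑ d, P a c * P b d * (K b c * Y d a - K b d * Y c a))
      = (∑ a, ∑ b, ∑ c, ∑ d, P a c * P b d * (K b c * Y d a - K b d * Y a c)) :=
    Finset.sum_congr rfl fun a _ => Finset.sum_congr rfl fun b _ =>
      Finset.sum_congr rfl fun c _ => Finset.sum_congr rfl fun d _ => by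
        rw [hYsym c a]
  have f6 : (∑ b, ∑ c, ∑ d, P b d * n c
        * ((∑ a, ℓ a * R a b c d) + DLK d b c - DLK c b d))
      = (∑ b, ∑ c, ∑ d, P b d * n c * (∑ a, ℓ a * R a b c d))
        + ℓ2 * (∑ b, ∑ c, ∑ d, P b d * n c * (DK d b c - DK c b d))
        + (1 : ℝ) * (∑ b, ∑ c, ∑ d, P b d * n c
            * (K b c * Dl2 d - K b d * Dl2 c)) := by
    rw [show (∑ b, ∑ c, ∑ d, P b d * n c
          * ((∑ a, ℓ a * R a b c d) + DLK d b c - DLK c b d))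
        = ∑ b, ∑ c, ∑ d, (P b d * n c * (∑ a, ℓ a * R a b c d)
          + ℓ2 * (P b d * n c * (DK d b c - DK c b d))
          + (1 : ℝ) * (P b d * n c * (K b c * Dl2 d - K b d * Dl2 c)))
      from Finset.sum_congr rfl fun b _ => Finset.sum_congr rfl fun c _ =>
        Finset.sum_congr rfl fun d _ => by
          rw [hDLK d b c, hDLK c b d]; ring]
    simp only [GC_sum3_add, GC_sum3_const_mul]
  rw [f1, f2, f3, f4, f5, f7, f6]
  ring

lemma GC_alg2 (P γ K Y F DL : Fin m → Fin m → ℝ) (ℓ n Dl2 : Fin m → ℝ) (ℓ2 n2 : ℝ)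
    (R : Fin m → Fin m → Fin m → Fin m → ℝ) (DK : Fin m → Fin m → Fin m → ℝ)
    (I : Fin m → Fin m → Fin m → ℝ) (II : Fin m → Fin m → Fin m → Fin m → ℝ)
    (hγsym : ∀ a b, γ a b = γ b a)
    (hE3 : (∑ a, n a * ℓ a) + n2 * ℓ2 = 1)
    (hE4 : ∀ a, (∑ b, γ a b * n b) + n2 * ℓ a = 0)
    (hI : ∀ b c d, I b c d = (∑ a, ℓ a * R a b c d)
      + ℓ2 * (DK d b c - DK c b d) + K b c * Dl2 d / 2 - K b d * Dl2 c / 2)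
    (hII : ∀ a b c d, II a b c d = (∑ f, γ a f * R f b c d)
      - K b d * (DL c a + ℓ2 * K c a) + K b c * (DL d a + ℓ2 * K d a)
      - ℓ a * (DK c b d - DK d b c))
    (hDL : ∀ c a, DL c a + ℓ2 * K c a = Y c a + F c a)
    (c : Fin m) :
    (∑ b, ∑ d, I b c d * (n2 * P b d - n b * n d))
      + (∑ a, ∑ b, ∑ d, II a b c d * n a * P b d)
    = (∑ b, ∑ d, (P b d - ℓ2 * n b * n d) * (DK d b c - DK c b d))
      + (∑ b, ∑ d, (n2 * P b d - n b * n d)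
          * (K b c * Dl2 d - K b d * Dl2 c)) / 2
      + (∑ a, ∑ b, ∑ d, P b d * n a
          * (K b c * (Y d a + F d a) - K b d * (Y c a + F c a)))
      - (∑ a, ∑ b, ∑ d, n b * n d * ℓ a * R a b c d) := by
  have hnγ : ∀ f, (∑ a, n a * γ a f) = -n2 * ℓ f := by
    intro f
    have h0 := hE4 f
    have h' : (∑ b, γ f b * n b) = ∑ a, n a * γ a f :=
      Finset.sum_congr rfl fun a _ => by rw [hγsym f a]; ring
    linarith
  have hnℓ : (∑ a, n a * ℓ a) = 1 - n2 * ℓ2 := by linarith [hE3]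
  have e1 : (∑ b, ∑ d, I b c d * (n2 * P b d - n b * n d))
      = n2 * (∑ b, ∑ d, P b d * (∑ a, ℓ a * R a b c d))
        + (-1 : ℝ) * (∑ b, ∑ d, n b * n d * (∑ a, ℓ a * R a b c d))
        + (ℓ2 * n2) * (∑ b, ∑ d, P b d * (DK d b c - DK c b d))
        + (-ℓ2) * (∑ b, ∑ d, n b * n d * (DK d b c - DK c b d))
        + (n2 / 2) * (∑ b, ∑ d, P b d * (K b c * Dl2 d - K b d * Dl2 c))
        + (-(1 : ℝ) / 2)
            * (∑ b, ∑ d, n b * n d * (K b c * Dl2 d - K b d * Dl2 c)) := by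
    rw [show (∑ b, ∑ d, I b c d * (n2 * P b d - n b * n d))
        = ∑ b, ∑ d, (n2 * (P b d * (∑ a, ℓ a * R a b c d))
          + (-1 : ℝ) * (n b * n d * (∑ a, ℓ a * R a b c d))
          + (ℓ2 * n2) * (P b d * (DK d b c - DK c b d))
          + (-ℓ2) * (n b * n d * (DK d b c - DK c b d))
          + (n2 / 2) * (P b d * (K b c * Dl2 d - K b d * Dl2 c))
          + (-(1 : ℝ) / 2) * (n b * n d * (K b c * Dl2 d - K b d * Dl2 c)))
      from Finset.sum_congr rfl fun b _ => Finset.sum_congr rfl fun d _ => by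
        rw [hI]; ring]
    simp only [GC_sum2_add, GC_sum2_const_mul]
  have e2a : (∑ a, ∑ b, ∑ d, II a b c d * n a * P b d)
      = (∑ a, ∑ b, ∑ d, (∑ f, γ a f * R f b c d) * n a * P b d)
        + (∑ a, ∑ b, ∑ d, P b d * n a
            * (K b c * (Y d a + F d a) - K b d * (Y c a + F c a)))
        + (∑ a, ∑ b, ∑ d, (n a * ℓ a) * (P b d * (DK d b c - DK c b d))) := by
    rw [show (∑ a, ∑ b, ∑ d, II a b c d * n a * P b d)
        = ∑ a, ∑ b, ∑ d, ((∑ f, γ a f * R f b c d) * n a * P b d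
          + P b d * n a * (K b c * (Y d a + F d a) - K b d * (Y c a + F c a))
          + (n a * ℓ a) * (P b d * (DK d b c - DK c b d)))
      from Finset.sum_congr rfl fun a _ => Finset.sum_congr rfl fun b _ =>
        Finset.sum_congr rfl fun d _ => by
          rw [hII, hDL c a, hDL d a]; ring]
    simp only [GC_sum3_add]
  have e2b : (∑ a, ∑ b, ∑ d, (∑ f, γ a f * R f b c d) * n a * P b d)
      = (-n2) * (∑ b, ∑ d, P b d * (∑ a, ℓ a * R a b c d)) := by
    rw [GC_sum_comm3]
    rw [show (∑ b, ∑ d, ∑ a, (∑ f, γ a f * R f b c d) * n a * P b d)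
        = ∑ b, ∑ d, (-n2) * (P b d * (∑ a, ℓ a * R a b c d)) from ?_]
    · exact GC_sum2_const_mul _ _
    refine Finset.sum_congr rfl fun b _ => Finset.sum_congr rfl fun d _ => ?_
    calc (∑ a, (∑ f, γ a f * R f b c d) * n a * P b d)
        = ∑ a, ∑ f, n a * γ a f * (R f b c d * P b d) := by
          refine Finset.sum_congr rfl fun a _ => ?_
          rw [Finset.sum_mul, Finset.sum_mul]
          exact Finset.sum_congr rfl fun f _ => by ring
      _ = ∑ f, ∑ a, n a * γ a f * (R f b c d * P b d) := Finset.sum_comm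
      _ = ∑ f, (-n2 * ℓ f) * (R f b c d * P b d) := by
          refine Finset.sum_congr rfl fun f _ => ?_
          rw [← Finset.sum_mul, hnγ f]
      _ = ∑ f, (-n2) * (P b d * (ℓ f * R f b c d)) := by
          exact Finset.sum_congr rfl fun f _ => by ring
      _ = (-n2) * (P b d * (∑ f, ℓ f * R f b c d)) := by
          rw [← Finset.mul_sum, ← Finset.mul_sum]
  have e2c : (∑ a, ∑ b, ∑ d, (n a * ℓ a) * (P b d * (DK d b c - DK c b d)))
      = (1 - n2 * ℓ2) * (∑ b, ∑ d, P b d * (DK d b c - DK c b d)) := by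
    have h : ∀ a : Fin m, (∑ b, ∑ d, (n a * ℓ a) * (P b d * (DK d b c - DK c b d)))
        = (n a * ℓ a) * ∑ b, ∑ d, P b d * (DK d b c - DK c b d) :=
      fun a => GC_sum2_const_mul _ _
    rw [Finset.sum_congr rfl fun a _ => h a, ← Finset.sum_mul, hnℓ]
  have e3 : (∑ b, ∑ d, (P b d - ℓ2 * n b * n d) * (DK d b c - DK c b d))
      = (∑ b, ∑ d, P b d * (DK d b c - DK c b d))
        + (-ℓ2) * (∑ b, ∑ d, n b * n d * (DK d b c - DK c b d)) := by
    rw [show (∑ b, ∑ d, (P b d - ℓ2 * n b * n d) * (DK d b c - DK c b d))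
        = ∑ b, ∑ d, ((1:ℝ) * (P b d * (DK d b c - DK c b d))
            + (-ℓ2) * (n b * n d * (DK d b c - DK c b d))) from
      Finset.sum_congr rfl fun b _ => Finset.sum_congr rfl fun d _ => by ring]
    simp only [GC_sum2_add, GC_sum2_const_mul]; ring
  have e4 : (∑ b, ∑ d, (n2 * P b d - n b * n d) * (K b c * Dl2 d - K b d * Dl2 c))
      = n2 * (∑ b, ∑ d, P b d * (K b c * Dl2 d - K b d * Dl2 c))
        + (-1 : ℝ) * (∑ b, ∑ d, n b * n d * (K b c * Dl2 d - K b d * Dl2 c)) := by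
    rw [show (∑ b, ∑ d, (n2 * P b d - n b * n d) * (K b c * Dl2 d - K b d * Dl2 c))
        = ∑ b, ∑ d, (n2 * (P b d * (K b c * Dl2 d - K b d * Dl2 c))
            + (-1 : ℝ) * (n b * n d * (K b c * Dl2 d - K b d * Dl2 c))) from
      Finset.sum_congr rfl fun b _ => Finset.sum_congr rfl fun d _ => by ring]
    simp only [GC_sum2_add, GC_sum2_const_mul]
  have e5 : (∑ a, ∑ b, ∑ d, n b * n d * ℓ a * R a b c d)
      = ∑ b, ∑ d, n b * n d * (∑ a, ℓ a * R a b c d) := by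
    rw [GC_sum_comm3]
    refine Finset.sum_congr rfl fun b _ => Finset.sum_congr rfl fun d _ => ?_
    rw [Finset.mul_sum]
    exact Finset.sum_congr rfl fun a _ => by ring
  rw [e1, e2a, e2b, e2c, e3, e4, e5]
  ring

end Algebra

namespace GaussCodazzi

open HypData

variable {m : ℕ}

variable {U : Set (Fin m → ℝ)} {γ : Ten m} {ℓ : Vec m} {ℓ2 : Sc m}
  {P : Ten m} {n : Vec m} {n2 : Sc m} {Y : Ten m} {x : Fin m → ℝ}

/-- Differentiated inverse relation: derivative of `γ·n + n2·ℓ = 0`. -/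
lemma GC_DInv4 (hU : IsOpen U) (hdata : MetricData U γ ℓ ℓ2 P n n2)
    (hx : x ∈ U) (a c : Fin m) :
    (∑ d, γ x a d * pd c (fun y => n y d) x)
      + (∑ d, n x d * pd c (fun y => γ y a d) x)
      + n2 x * pd c (fun y => ℓ y a) x + ℓ x a * pd c n2 x = 0 := by
  obtain ⟨hγsm, hℓsm, hℓ2sm, hPsm, hnsm, hn2sm, hγs, hPs, hinv⟩ := hdata
  have hdprod : ∀ d ∈ (Finset.univ : Finset (Fin m)),
      DifferentiableAt ℝ (fun y => γ y a d * n y d) x :=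
    fun d _ => (GC_diffAt hU (hγsm a d) hx).mul (GC_diffAt hU (hnsm d) hx)
  have h0 : pd c (fun y => (∑ d, γ y a d * n y d) + n2 y * ℓ y a) x = 0 :=
    GC_pd_zero hU (fun y hy => (hinv y hy).2.2.2 a) hx c
  rw [GC_pd_add (DifferentiableAt.fun_sum hdprod)
      ((GC_diffAt hU hn2sm hx).fun_mul (GC_diffAt hU (hℓsm a) hx)) c,
    GC_pd_sum hdprod c,
    GC_pd_mul (GC_diffAt hU hn2sm hx) (GC_diffAt hU (hℓsm a) hx) c,
    Finset.sum_congr rfl fun d _ =>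
      GC_pd_mul (GC_diffAt hU (hγsm a d) hx) (GC_diffAt hU (hnsm d) hx) c,
    Finset.sum_add_distrib] at h0
  linarith [h0]

/-- Symmetry of `K`. -/
lemma GC_Ksym (hU : IsOpen U) (hdata : MetricData U γ ℓ ℓ2 P n n2)
    (hYs : ∀ z ∈ U, ∀ a b, Y z a b = Y z b a) (hx : x ∈ U) (a b : Fin m) :
    Kf γ ℓ n n2 Y x a b = Kf γ ℓ n n2 Y x b a := by
  obtain ⟨hγsm, hℓsm, hℓ2sm, hPsm, hnsm, hn2sm, hγs, hPs, hinv⟩ := hdata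
  have hpd : ∀ e : Fin m, pd e (fun y => γ y a b) x = pd e (fun y => γ y b a) x :=
    fun e => GC_pd_congr hU (fun y hy => hγs y hy a b) hx e
  unfold Kf Uf
  rw [hYs x hx a b,
    Finset.sum_congr rfl fun e _ =>
      show n x e * pd e (fun y => γ y a b) x + γ x e b * pd a (fun y => n y e) x
          + γ x a e * pd b (fun y => n y e) x
        = n x e * pd e (fun y => γ y b a) x + γ x e a * pd b (fun y => n y e) x
          + γ x b e * pd a (fun y => n y e) x from by
        rw [hpd e, hγs x hx e b, hγs x hx a e]; ring]
  ring

/-- The key identity `∇̄_c ℓ_a + ℓ⁽²⁾K_{ca} = Y_{ca} + F_{ca}`. -/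
lemma GC_DL (hU : IsOpen U) (hdata : MetricData U γ ℓ ℓ2 P n n2)
    (hx : x ∈ U) (c a : Fin m) :
    covD1 (GamB γ ℓ P n Y) ℓ x c a + ℓ2 x * Kf γ ℓ n n2 Y x c a
      = Y x c a + Ff ℓ x c a := by
  have hD1 := GC_DInv4 hU hdata hx a c
  have hD2 := GC_DInv4 hU hdata hx c a
  obtain ⟨hγsm, hℓsm, hℓ2sm, hPsm, hnsm, hn2sm, hγs, hPs, hinv⟩ := hdata
  obtain ⟨hE1, hE2, hE3, hE4⟩ := hinv x hx
  have hPℓ : ∀ d, (∑ e, ℓ x e * P x e d) = -(ℓ2 x * n x d) := by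
    intro d
    have h0 := hE2 d
    have h' : (∑ b, P x d b * ℓ x b) = ∑ e, ℓ x e * P x e d :=
      Finset.sum_congr rfl fun e _ => by rw [hPs x hx d e]; ring
    linarith
  have hnℓ : (∑ e, n x e * ℓ x e) = 1 - n2 x * ℓ2 x := by linarith [hE3]
  have hsplit : (∑ e, GamB γ ℓ P n Y x e c a * ℓ x e)
      = (∑ d, (-(ℓ2 x * n x d)) * (pd c (fun y => γ y a d) x
            + pd a (fun y => γ y c d) x - pd d (fun y => γ y c a) x)) / 2
        + (1 - n2 x * ℓ2 x) * ((pd c (fun y => ℓ y a) x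
            + pd a (fun y => ℓ y c) x) / 2 - Y x c a) := by
    calc (∑ e, GamB γ ℓ P n Y x e c a * ℓ x e)
        = ∑ e, ((∑ d, (ℓ x e * P x e d) * (pd c (fun y => γ y a d) x
              + pd a (fun y => γ y c d) x - pd d (fun y => γ y c a) x)) / 2
            + (n x e * ℓ x e) * ((pd c (fun y => ℓ y a) x
              + pd a (fun y => ℓ y c) x) / 2 - Y x c a)) := by
          refine Finset.sum_congr rfl fun e _ => ?_
          unfold GamB Gam0
          rw [show (∑ d, (ℓ x e * P x e d) * (pd c (fun y => γ y a d) x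
                + pd a (fun y => γ y c d) x - pd d (fun y => γ y c a) x))
              = (∑ d, P x e d * (pd c (fun y => γ y a d) x
                + pd a (fun y => γ y c d) x - pd d (fun y => γ y c a) x)) * ℓ x e
            from by
              rw [Finset.sum_mul]
              exact Finset.sum_congr rfl fun d _ => by ring]
          ring
      _ = (∑ e, ∑ d, (ℓ x e * P x e d) * (pd c (fun y => γ y a d) x
              + pd a (fun y => γ y c d) x - pd d (fun y => γ y c a) x)) / 2
            + (∑ e, n x e * ℓ x e) * ((pd c (fun y => ℓ y a) x
              + pd a (fun y => ℓ y c) x) / 2 - Y x c a) := by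
          rw [Finset.sum_add_distrib, ← Finset.sum_div, ← Finset.sum_mul]
      _ = (∑ d, (-(ℓ2 x * n x d)) * (pd c (fun y => γ y a d) x
              + pd a (fun y => γ y c d) x - pd d (fun y => γ y c a) x)) / 2
            + (1 - n2 x * ℓ2 x) * ((pd c (fun y => ℓ y a) x
              + pd a (fun y => ℓ y c) x) / 2 - Y x c a) := by
          rw [hnℓ, Finset.sum_comm]
          congr 1
          congr 1
          refine Finset.sum_congr rfl fun d _ => ?_
          rw [← Finset.sum_mul, hPℓ d]
  have hGsplit : (∑ d, (-(ℓ2 x * n x d)) * (pd c (fun y => γ y a d) x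
        + pd a (fun y => γ y c d) x - pd d (fun y => γ y c a) x))
      = (-(ℓ2 x)) * ((∑ d, n x d * pd c (fun y => γ y a d) x)
          + (∑ d, n x d * pd a (fun y => γ y c d) x)
          - (∑ d, n x d * pd d (fun y => γ y c a) x)) := by
    rw [show (∑ d, (-(ℓ2 x * n x d)) * (pd c (fun y => γ y a d) x
          + pd a (fun y => γ y c d) x - pd d (fun y => γ y c a) x))
        = ∑ d, (-(ℓ2 x)) * (n x d * pd c (fun y => γ y a d) x
            + n x d * pd a (fun y => γ y c d) x
            - n x d * pd d (fun y => γ y c a) x)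
      from Finset.sum_congr rfl fun d _ => by ring]
    rw [← Finset.mul_sum]
    congr 1
    simp [Finset.sum_add_distrib, Finset.sum_sub_distrib]
  have hUsplit : (∑ e, (n x e * pd e (fun y => γ y c a) x
        + γ x e a * pd c (fun y => n y e) x
        + γ x c e * pd a (fun y => n y e) x))
      = (∑ d, n x d * pd d (fun y => γ y c a) x)
        + (∑ d, γ x a d * pd c (fun y => n y d) x)
        + (∑ d, γ x c d * pd a (fun y => n y d) x) := by
    rw [show (∑ e, (n x e * pd e (fun y => γ y c a) x
          + γ x e a * pd c (fun y => n y e) x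
          + γ x c e * pd a (fun y => n y e) x))
        = ∑ e, (n x e * pd e (fun y => γ y c a) x
          + γ x a e * pd c (fun y => n y e) x
          + γ x c e * pd a (fun y => n y e) x)
      from Finset.sum_congr rfl fun e _ => by rw [hγs x hx e a]]
    simp [Finset.sum_add_distrib]
  unfold covD1 Kf Uf Ff
  rw [hsplit, hGsplit, hUsplit]
  linear_combination (ℓ2 x / 2) * hD1 + (ℓ2 x / 2) * hD2

/-- Differentiability of the `K` field. -/
lemma GC_Kdiff (hU : IsOpen U) (hdata : MetricData U γ ℓ ℓ2 P n n2)
    (hYsm : SmTen U Y) (hx : x ∈ U) (b c : Fin m) :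
    DifferentiableAt ℝ (fun y => Kf γ ℓ n n2 Y y b c) x := by
  obtain ⟨hγsm, hℓsm, hℓ2sm, hPsm, hnsm, hn2sm, hγs, hPs, hinv⟩ := hdata
  have h1 : DifferentiableAt ℝ (fun y => n2 y * Y y b c) x :=
    (GC_diffAt hU hn2sm hx).mul (GC_diffAt hU (hYsm b c) hx)
  have h2 : ∀ e ∈ (Finset.univ : Finset (Fin m)),
      DifferentiableAt ℝ (fun y => n y e * pd e (fun z => γ z b c) y
        + γ y e c * pd b (fun z => n z e) y
        + γ y b e * pd c (fun z => n z e) y) x :=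
    fun e _ =>
      (((GC_diffAt hU (hnsm e) hx).mul (GC_diffAt_pd hU (hγsm b c) hx e)).add
        ((GC_diffAt hU (hγsm e c) hx).mul (GC_diffAt_pd hU (hnsm e) hx b))).add
        ((GC_diffAt hU (hγsm b e) hx).mul (GC_diffAt_pd hU (hnsm e) hx c))
  have h3 : DifferentiableAt ℝ (fun y => ℓ y b * pd c n2 y) x :=
    (GC_diffAt hU (hℓsm b) hx).mul (GC_diffAt_pd hU hn2sm hx c)
  have h4 : DifferentiableAt ℝ (fun y => ℓ y c * pd b n2 y) x :=
    (GC_diffAt hU (hℓsm c) hx).mul (GC_diffAt_pd hU hn2sm hx b)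
  have h5 : DifferentiableAt ℝ (fun y => (∑ e, (n y e * pd e (fun z => γ z b c) y
        + γ y e c * pd b (fun z => n z e) y
        + γ y b e * pd c (fun z => n z e) y))
      + ℓ y b * pd c n2 y + ℓ y c * pd b n2 y) x :=
    ((DifferentiableAt.fun_sum h2).add h3).add h4
  have h6 : DifferentiableAt ℝ (fun y => ((∑ e, (n y e * pd e (fun z => γ z b c) y
        + γ y e c * pd b (fun z => n z e) y
        + γ y b e * pd c (fun z => n z e) y))
      + ℓ y b * pd c n2 y + ℓ y c * pd b n2 y) / 2) x := by
    simp only [div_eq_mul_inv]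
    exact h5.mul_const ((2 : ℝ)⁻¹)
  simp only [Kf, Uf]
  exact h1.add h6

/-- Leibniz rule for `∇̄(ℓ⁽²⁾K)`. -/
lemma GC_DLK (hU : IsOpen U) (hdata : MetricData U γ ℓ ℓ2 P n n2)
    (hYsm : SmTen U Y) (hx : x ∈ U) (d b c : Fin m) :
    covD2 (GamB γ ℓ P n Y) (fun y b' c' => ℓ2 y * Kf γ ℓ n n2 Y y b' c') x d b c
      = ℓ2 x * covD2 (GamB γ ℓ P n Y) (Kf γ ℓ n n2 Y) x d b c
        + Kf γ ℓ n n2 Y x b c * pd d ℓ2 x := by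
  have hℓ2d : DifferentiableAt ℝ ℓ2 x := GC_diffAt hU hdata.2.2.1 hx
  have hKd := GC_Kdiff hU hdata hYsm hx b c
  simp only [covD2]
  rw [GC_pd_mul hℓ2d hKd d,
    show (∑ e, GamB γ ℓ P n Y x e d b * (ℓ2 x * Kf γ ℓ n n2 Y x e c))
        = ℓ2 x * ∑ e, GamB γ ℓ P n Y x e d b * Kf γ ℓ n n2 Y x e c from by
      rw [Finset.mul_sum]; exact Finset.sum_congr rfl fun e _ => by ring,
    show (∑ e, GamB γ ℓ P n Y x e d c * (ℓ2 x * Kf γ ℓ n n2 Y x b e))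
        = ℓ2 x * ∑ e, GamB γ ℓ P n Y x e d c * Kf γ ℓ n n2 Y x b e from by
      rw [Finset.mul_sum]; exact Finset.sum_congr rfl fun e _ => by ring]
  ring

/-- Theorem 1 of the paper, the constraint equations for a general
hypersurface written in terms of the connection `Γ̄`. -/
theorem statement14 (m : ℕ) (hm : 1 ≤ m) (U : Set (Fin m → ℝ)) (hU : IsOpen U)
    (γ : Ten m) (ℓ : Vec m) (ℓ2 : Sc m) (P : Ten m) (n : Vec m) (n2 : Sc m)
    (hdata : MetricData U γ ℓ ℓ2 P n n2)
    (Y : Ten m) (hYsm : SmTen U Y) (hYs : ∀ x ∈ U, ∀ a b, Y x a b = Y x b a) :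
    -- (1): the normal-transversal constraint (2 G(n,ℓ) for embedded data)
    ((∀ x ∈ U,
      -2 * (∑ b, ∑ c, ∑ d, Idef γ ℓ ℓ2 P n n2 Y x b c d * P x b d * n x c)
        - (∑ a, ∑ b, ∑ c, ∑ d,
            IIdef γ ℓ ℓ2 P n n2 Y x a b c d * P x a c * P x b d)
      = -(∑ b, ∑ c, ∑ d, P x b d * curv (GamB γ ℓ P n Y) x c b c d)
        - (∑ b, ∑ c, ∑ d, P x b d * n x c
            * ((∑ a, ℓ x a * curv (GamB γ ℓ P n Y) x a b c d)
              + covD2 (GamB γ ℓ P n Y)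
                  (fun y b' c' => ℓ2 y * Kf γ ℓ n n2 Y y b' c') x d b c
              - covD2 (GamB γ ℓ P n Y)
                  (fun y b' c' => ℓ2 y * Kf γ ℓ n n2 Y y b' c') x c b d))
        - (∑ a, ∑ b, ∑ c, ∑ d, P x a c * P x b d
            * (Kf γ ℓ n n2 Y x b c * Y x d a - Kf γ ℓ n n2 Y x b d * Y x a c)))
    -- (2): the normal-tangential constraint (−G(n,e_c) for embedded data)
    ∧ (∀ x ∈ U, ∀ c,
      (∑ b, ∑ d, Idef γ ℓ ℓ2 P n n2 Y x b c d
          * (n2 x * P x b d - n x b * n x d))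
        + (∑ a, ∑ b, ∑ d, IIdef γ ℓ ℓ2 P n n2 Y x a b c d * n x a * P x b d)
      = (∑ b, ∑ d, (P x b d - ℓ2 x * n x b * n x d)
          * (covD2 (GamB γ ℓ P n Y) (Kf γ ℓ n n2 Y) x d b c
            - covD2 (GamB γ ℓ P n Y) (Kf γ ℓ n n2 Y) x c b d))
        + (∑ b, ∑ d, (n2 x * P x b d - n x b * n x d)
            * (Kf γ ℓ n n2 Y x b c * pd d ℓ2 x
              - Kf γ ℓ n n2 Y x b d * pd c ℓ2 x)) / 2
        + (∑ a, ∑ b, ∑ d, P x b d * n x a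
            * (Kf γ ℓ n n2 Y x b c * (Y x d a + Ff ℓ x d a)
              - Kf γ ℓ n n2 Y x b d * (Y x c a + Ff ℓ x c a)))
        - (∑ a, ∑ b, ∑ d, n x b * n x d * ℓ x a
            * curv (GamB γ ℓ P n Y) x a b c d))) := by
  constructor
  · intro x hx
    obtain ⟨hE1, hE2, hE3, hE4⟩ := hdata.2.2.2.2.2.2.2.2 x hx
    exact GC_alg1 (P x) (γ x) (Kf γ ℓ n n2 Y x) (Y x) (Ff ℓ x)
      (covD1 (GamB γ ℓ P n Y) ℓ x) (ℓ x) (n x) (fun e => pd e ℓ2 x) (ℓ2 x)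
      (curv (GamB γ ℓ P n Y) x)
      (covD2 (GamB γ ℓ P n Y) (Kf γ ℓ n n2 Y) x)
      (covD2 (GamB γ ℓ P n Y)
        (fun y b' c' => ℓ2 y * Kf γ ℓ n n2 Y y b' c') x)
      (Idef γ ℓ ℓ2 P n n2 Y x) (IIdef γ ℓ ℓ2 P n n2 Y x)
      (hdata.2.2.2.2.2.2.2.1 x hx)
      (hYs x hx)
      (GC_Ksym hU hdata hYs hx)
      (fun a b => by unfold Ff; ring)
      hE1 hE2
      (fun b c d => rfl)
      (fun a b c d => rfl)
      (GC_DL hU hdata hx)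
      (GC_DLK hU hdata hYsm hx)
  · intro x hx c
    obtain ⟨hE1, hE2, hE3, hE4⟩ := hdata.2.2.2.2.2.2.2.2 x hx
    exact GC_alg2 (P x) (γ x) (Kf γ ℓ n n2 Y x) (Y x) (Ff ℓ x)
      (covD1 (GamB γ ℓ P n Y) ℓ x) (ℓ x) (n x) (fun e => pd e ℓ2 x)
      (ℓ2 x) (n2 x)
      (curv (GamB γ ℓ P n Y) x)
      (covD2 (GamB γ ℓ P n Y) (Kf γ ℓ n n2 Y) x)
      (Idef γ ℓ ℓ2 P n n2 Y x) (IIdef γ ℓ ℓ2 P n n2 Y x)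
      (hdata.2.2.2.2.2.2.1 x hx)
      hE3 hE4
      (fun b c d => rfl)
      (fun a b c d => rfl)
      (GC_DL hU hdata hx)
      c


end GaussCodazzi
end
end

section
/- Let (γ, ℓ, ℓ⁽²⁾) be pointwise hypersurface metric data with inverse blocks (P, n, n⁽²⁾) and let V = (V_{ab}) be an arbitrary symmetric m×m matrix. Define τ^f_c := −(n⁽²⁾P^{bd} − n^bn^d)(δ^f_dV_{bc} − δ^f_cV_{bd}) and T^f := (P^{bf}n^c − P^{bc}n^f)V_{bc}. Then n^c τ^f_c + n⁽²⁾ T^f = 0 for every f. Consequently there exists a (unique) matrix τ^{fa} with τ^{fa}γ_{ac} = τ^f_c and τ^{fa}ℓ_a = T^f, and it is given explicitly by τ^{fa} = (n^fP^{ac} + n^aP^{fc})n^dV_{cd} − (n⁽²⁾P^{fc}P^{ad} + P^{fa}n^cn^d)V_{cd} + (n⁽²⁾P^{fa} − n^fn^a)P^{cd}V_{cd}. -/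
open scoped BigOperators

noncomputable section

open HypData in
private lemma kd_collapse {m : ℕ} (f : Fin m) (g : Fin m → ℝ) :
    (∑ d, kd f d * g d) = g f := by simp [kd]

open HypData in
private lemma kd_collapse' {m : ℕ} (f : Fin m) (g : Fin m → ℝ) :
    (∑ d, kd d f * g d) = g f := by simp [kd]

open HypData in
/-- Lemma 8 of the paper.  The tensors `τ^f_c` and `T^f` satisfy
`n^cτ^f_c + n⁽²⁾T^f = 0`, and they arise by lowering/contracting a unique tensor
`τ^{fa}`, given explicitly. -/
theorem statement16 (m : ℕ) (hm : 1 ≤ m)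
    (γ : Fin m → Fin m → ℝ) (ℓ : Fin m → ℝ) (ℓ2 : ℝ)
    (P : Fin m → Fin m → ℝ) (n : Fin m → ℝ) (n2 : ℝ)
    (hγs : ∀ a b, γ a b = γ b a) (hPs : ∀ a b, P a b = P b a)
    (hinv : InvBlocks γ ℓ ℓ2 P n n2)
    (V : Fin m → Fin m → ℝ) (hVs : ∀ a b, V a b = V b a) :
    -- n^c τ^f_c + n⁽²⁾ T^f = 0
    ((∀ f, (∑ c, n c * tauMixP P n n2 V f c) + n2 * tauVecP P n V f = 0)
    -- the explicit τ^{fa} lowers to τ^f_c and contracts to T^f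
    ∧ (∀ f c, (∑ a, tauP P n n2 V f a * γ a c) = tauMixP P n n2 V f c)
    ∧ (∀ f, (∑ a, tauP P n n2 V f a * ℓ a) = tauVecP P n V f)
    -- uniqueness
    ∧ (∀ τ' : Fin m → Fin m → ℝ,
        (∀ f c, (∑ a, τ' f a * γ a c) = tauMixP P n n2 V f c) →
        (∀ f, (∑ a, τ' f a * ℓ a) = tauVecP P n V f) →
        ∀ f a, τ' f a = tauP P n n2 V f a)) := by

  obtain ⟨h1, h2, h3, h4⟩ := hinv
  -- derived contraction identities
  have hPγ : ∀ p c : Fin m, (∑ a, P a p * γ a c) = kd p c - n p * ℓ c := by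
    intro p c
    have e : (∑ a, P a p * γ a c) = ∑ a, P p a * γ a c :=
      Finset.sum_congr rfl fun a _ => by rw [hPs]
    rw [e]; linarith [h1 p c]
  have hPγ' : ∀ p c : Fin m, (∑ a, P p a * γ a c) = kd p c - n p * ℓ c := by
    intro p c; linarith [h1 p c]
  have hnγ : ∀ c : Fin m, (∑ a, n a * γ a c) = -(n2 * ℓ c) := by
    intro c
    have e : (∑ a, n a * γ a c) = ∑ a, γ c a * n a :=
      Finset.sum_congr rfl fun a _ => by rw [hγs a c]; ring
    rw [e]; linarith [h4 c]
  have hPℓ : ∀ p : Fin m, (∑ a, P a p * ℓ a) = -(ℓ2 * n p) := by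
    intro p
    have e : (∑ a, P a p * ℓ a) = ∑ a, P p a * ℓ a :=
      Finset.sum_congr rfl fun a _ => by rw [hPs]
    rw [e]; linarith [h2 p]
  have hPℓ' : ∀ p : Fin m, (∑ a, P p a * ℓ a) = -(ℓ2 * n p) := by
    intro p; linarith [h2 p]
  have hnℓ : (∑ a, n a * ℓ a) = 1 - n2 * ℓ2 := by linarith [h3]
  -- atoms
  set Sv : ℝ := ∑ p, ∑ q, P p q * V p q with hSv
  set NNv : ℝ := ∑ p, ∑ q, n p * (n q * V p q) with hNNv
  -- canonical form of tauMixP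
  have hMix : ∀ f c : Fin m, tauMixP P n n2 V f c
      = n f * (∑ q, n q * V c q) - n2 * (∑ q, P f q * V q c)
        - kd f c * NNv + n2 * (kd f c * Sv) := by
    intro f c
    have e1 : ∀ b d : Fin m, (n2 * P b d - n b * n d) * (kd f d * V b c - kd f c * V b d)
        = kd f d * ((n2 * P b d - n b * n d) * V b c)
          - kd f c * (n2 * (P b d * V b d)) + kd f c * (n b * (n d * V b d)) := by
      intro b d; ring
    have e2 : ∀ b : Fin m, (n2 * P b f - n b * n f) * V b c
        = n2 * (P f b * V b c) - n f * (n b * V c b) := by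
      intro b; have hv := hVs c b; rw [hPs b f, hv]; ring
    simp only [tauMixP, e1, Finset.sum_sub_distrib, Finset.sum_add_distrib,
      ← Finset.mul_sum, kd_collapse, e2, hSv, hNNv]
    ring
  -- canonical form of tauVecP
  have hVec : ∀ f : Fin m, tauVecP P n V f
      = (∑ p, ∑ q, P f p * (n q * V p q)) - n f * Sv := by
    intro f
    have e : ∀ b c' : Fin m, (P b f * n c' - P b c' * n f) * V b c'
        = P f b * (n c' * V b c') - n f * (P b c' * V b c') := by
      intro b c'; rw [hPs b f]; ring
    simp only [tauVecP, e, Finset.sum_sub_distrib, ← Finset.mul_sum, hSv]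
  -- lowering: ∑ a τ^{fa} γ_{ac} in canonical form
  have hLow : ∀ f c : Fin m, (∑ a, tauP P n n2 V f a * γ a c)
      = n f * (∑ q, n q * V c q) - n2 * (∑ q, P f q * V q c)
        - kd f c * NNv + n2 * (kd f c * Sv) := by
    intro f c
    have split : (∑ a, tauP P n n2 V f a * γ a c)
        = (∑ a, (∑ p, ∑ q, (n f * P a p + n a * P f p) * n q * V p q) * γ a c)
          - (∑ a, (∑ p, ∑ q, (n2 * P f p * P a q + P f a * n p * n q) * V p q) * γ a c)
          + (∑ a, ((n2 * P f a - n f * n a) * Sv) * γ a c) := by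
      simp only [tauP, ← hSv, sub_mul, add_mul, Finset.sum_sub_distrib,
        Finset.sum_add_distrib]
    have E1 : (∑ a, (∑ p, ∑ q, (n f * P a p + n a * P f p) * n q * V p q) * γ a c)
        = n f * (∑ q, n q * V c q) - n f * ℓ c * NNv
          - n2 * ℓ c * (∑ p, ∑ q, P f p * (n q * V p q)) := by
      have f1 : ∀ p q : Fin m,
          (n f * (n q * V p q)) * (kd p c - n p * ℓ c)
            + (P f p * (n q * V p q)) * (-(n2 * ℓ c))
          = kd p c * (n f * (n q * V p q)) - (n f * ℓ c) * (n p * (n q * V p q))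
            - (n2 * ℓ c) * (P f p * (n q * V p q)) := by
        intro p q; ring
      calc (∑ a, (∑ p, ∑ q, (n f * P a p + n a * P f p) * n q * V p q) * γ a c)
          = ∑ a, ∑ p, ∑ q, ((n f * P a p + n a * P f p) * n q * V p q) * γ a c := by
            simp only [Finset.sum_mul]
        _ = ∑ p, ∑ a, ∑ q, ((n f * P a p + n a * P f p) * n q * V p q) * γ a c :=
            Finset.sum_comm
        _ = ∑ p, ∑ q, ∑ a, ((n f * P a p + n a * P f p) * n q * V p q) * γ a c :=
            Finset.sum_congr rfl fun p _ => Finset.sum_comm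
        _ = ∑ p, ∑ q, ((n f * (n q * V p q)) * (kd p c - n p * ℓ c)
              + (P f p * (n q * V p q)) * (-(n2 * ℓ c))) := by
            refine Finset.sum_congr rfl fun p _ => Finset.sum_congr rfl fun q _ => ?_
            rw [← hPγ p c, ← hnγ c, Finset.mul_sum, Finset.mul_sum,
              ← Finset.sum_add_distrib]
            exact Finset.sum_congr rfl fun a _ => by ring
        _ = _ := by
            simp only [f1, Finset.sum_sub_distrib, ← Finset.mul_sum, kd_collapse',
              hNNv]
    have E2 : (∑ a, (∑ p, ∑ q, (n2 * P f p * P a q + P f a * n p * n q) * V p q) * γ a c)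
        = n2 * (∑ q, P f q * V q c)
          - n2 * ℓ c * (∑ p, ∑ q, P f p * (n q * V p q))
          + kd f c * NNv - n f * ℓ c * NNv := by
      have f1 : ∀ p q : Fin m,
          (n2 * (P f p * V p q)) * (kd q c - n q * ℓ c)
            + (n p * (n q * V p q)) * (kd f c - n f * ℓ c)
          = kd q c * (n2 * (P f p * V p q))
            - (n2 * ℓ c) * (P f p * (n q * V p q))
            + kd f c * (n p * (n q * V p q))
            - (n f * ℓ c) * (n p * (n q * V p q)) := by
        intro p q; ring
      calc (∑ a, (∑ p, ∑ q, (n2 * P f p * P a q + P f a * n p * n q) * V p q) * γ a c)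
          = ∑ a, ∑ p, ∑ q, ((n2 * P f p * P a q + P f a * n p * n q) * V p q) * γ a c := by
            simp only [Finset.sum_mul]
        _ = ∑ p, ∑ a, ∑ q, ((n2 * P f p * P a q + P f a * n p * n q) * V p q) * γ a c :=
            Finset.sum_comm
        _ = ∑ p, ∑ q, ∑ a, ((n2 * P f p * P a q + P f a * n p * n q) * V p q) * γ a c :=
            Finset.sum_congr rfl fun p _ => Finset.sum_comm
        _ = ∑ p, ∑ q, ((n2 * (P f p * V p q)) * (kd q c - n q * ℓ c)
              + (n p * (n q * V p q)) * (kd f c - n f * ℓ c)) := by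
            refine Finset.sum_congr rfl fun p _ => Finset.sum_congr rfl fun q _ => ?_
            rw [← hPγ q c, ← hPγ' f c, Finset.mul_sum, Finset.mul_sum,
              ← Finset.sum_add_distrib]
            exact Finset.sum_congr rfl fun a _ => by ring
        _ = _ := by
            simp only [f1, Finset.sum_sub_distrib, Finset.sum_add_distrib,
              ← Finset.mul_sum, kd_collapse', hNNv]
    have E3 : (∑ a, ((n2 * P f a - n f * n a) * Sv) * γ a c) = n2 * (kd f c * Sv) := by
      have e : (∑ a, ((n2 * P f a - n f * n a) * Sv) * γ a c)
          = ∑ a, ((n2 * Sv) * (P f a * γ a c) - (n f * Sv) * (n a * γ a c)) :=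
        Finset.sum_congr rfl fun a _ => by ring
      rw [e, Finset.sum_sub_distrib, ← Finset.mul_sum, ← Finset.mul_sum,
        hPγ' f c, hnγ c]
      ring
    rw [split, E1, E2, E3]; ring
  -- contraction with ℓ
  have hLowℓ : ∀ f : Fin m, (∑ a, tauP P n n2 V f a * ℓ a)
      = (∑ p, ∑ q, P f p * (n q * V p q)) - n f * Sv := by
    intro f
    have split : (∑ a, tauP P n n2 V f a * ℓ a)
        = (∑ a, (∑ p, ∑ q, (n f * P a p + n a * P f p) * n q * V p q) * ℓ a)
          - (∑ a, (∑ p, ∑ q, (n2 * P f p * P a q + P f a * n p * n q) * V p q) * ℓ a)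
          + (∑ a, ((n2 * P f a - n f * n a) * Sv) * ℓ a) := by
      simp only [tauP, ← hSv, sub_mul, add_mul, Finset.sum_sub_distrib,
        Finset.sum_add_distrib]
    have E1 : (∑ a, (∑ p, ∑ q, (n f * P a p + n a * P f p) * n q * V p q) * ℓ a)
        = -(n f * ℓ2) * NNv + (1 - n2 * ℓ2) * (∑ p, ∑ q, P f p * (n q * V p q)) := by
      have f1 : ∀ p q : Fin m,
          (n f * (n q * V p q)) * (-(ℓ2 * n p))
            + (P f p * (n q * V p q)) * (1 - n2 * ℓ2)
          = -(n f * ℓ2) * (n p * (n q * V p q))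
            + (1 - n2 * ℓ2) * (P f p * (n q * V p q)) := by
        intro p q; ring
      calc (∑ a, (∑ p, ∑ q, (n f * P a p + n a * P f p) * n q * V p q) * ℓ a)
          = ∑ a, ∑ p, ∑ q, ((n f * P a p + n a * P f p) * n q * V p q) * ℓ a := by
            simp only [Finset.sum_mul]
        _ = ∑ p, ∑ a, ∑ q, ((n f * P a p + n a * P f p) * n q * V p q) * ℓ a :=
            Finset.sum_comm
        _ = ∑ p, ∑ q, ∑ a, ((n f * P a p + n a * P f p) * n q * V p q) * ℓ a :=
            Finset.sum_congr rfl fun p _ => Finset.sum_comm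
        _ = ∑ p, ∑ q, ((n f * (n q * V p q)) * (-(ℓ2 * n p))
              + (P f p * (n q * V p q)) * (1 - n2 * ℓ2)) := by
            refine Finset.sum_congr rfl fun p _ => Finset.sum_congr rfl fun q _ => ?_
            rw [← hPℓ p, ← hnℓ, Finset.mul_sum, Finset.mul_sum,
              ← Finset.sum_add_distrib]
            exact Finset.sum_congr rfl fun a _ => by ring
        _ = _ := by
            simp only [f1, Finset.sum_add_distrib, ← Finset.mul_sum, hNNv]
    have E2 : (∑ a, (∑ p, ∑ q, (n2 * P f p * P a q + P f a * n p * n q) * V p q) * ℓ a)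
        = -(n2 * ℓ2) * (∑ p, ∑ q, P f p * (n q * V p q)) + -(ℓ2 * n f) * NNv := by
      have f1 : ∀ p q : Fin m,
          (n2 * (P f p * V p q)) * (-(ℓ2 * n q))
            + (n p * (n q * V p q)) * (-(ℓ2 * n f))
          = -(n2 * ℓ2) * (P f p * (n q * V p q))
            + -(ℓ2 * n f) * (n p * (n q * V p q)) := by
        intro p q; ring
      calc (∑ a, (∑ p, ∑ q, (n2 * P f p * P a q + P f a * n p * n q) * V p q) * ℓ a)
          = ∑ a, ∑ p, ∑ q, ((n2 * P f p * P a q + P f a * n p * n q) * V p q) * ℓ a := by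
            simp only [Finset.sum_mul]
        _ = ∑ p, ∑ a, ∑ q, ((n2 * P f p * P a q + P f a * n p * n q) * V p q) * ℓ a :=
            Finset.sum_comm
        _ = ∑ p, ∑ q, ∑ a, ((n2 * P f p * P a q + P f a * n p * n q) * V p q) * ℓ a :=
            Finset.sum_congr rfl fun p _ => Finset.sum_comm
        _ = ∑ p, ∑ q, ((n2 * (P f p * V p q)) * (-(ℓ2 * n q))
              + (n p * (n q * V p q)) * (-(ℓ2 * n f))) := by
            refine Finset.sum_congr rfl fun p _ => Finset.sum_congr rfl fun q _ => ?_
            rw [← hPℓ q, ← hPℓ' f, Finset.mul_sum, Finset.mul_sum,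
              ← Finset.sum_add_distrib]
            exact Finset.sum_congr rfl fun a _ => by ring
        _ = _ := by
            simp only [f1, Finset.sum_add_distrib, ← Finset.mul_sum, hNNv]
    have E3 : (∑ a, ((n2 * P f a - n f * n a) * Sv) * ℓ a) = -(n f * Sv) := by
      have e : (∑ a, ((n2 * P f a - n f * n a) * Sv) * ℓ a)
          = ∑ a, ((n2 * Sv) * (P f a * ℓ a) - (n f * Sv) * (n a * ℓ a)) :=
        Finset.sum_congr rfl fun a _ => by ring
      rw [e, Finset.sum_sub_distrib, ← Finset.mul_sum, ← Finset.mul_sum,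
        hPℓ' f, hnℓ]
      ring
    rw [split, E1, E2, E3]; ring
  -- established parts 2 and 3
  have part2 : ∀ f c : Fin m, (∑ a, tauP P n n2 V f a * γ a c) = tauMixP P n n2 V f c := by
    intro f c; rw [hLow f c, hMix f c]
  have part3 : ∀ f : Fin m, (∑ a, tauP P n n2 V f a * ℓ a) = tauVecP P n V f := by
    intro f; rw [hLowℓ f, hVec f]
  -- transposed inverse relation, for reconstruction
  have hγP : ∀ b a : Fin m, (∑ c, γ b c * P c a) + ℓ b * n a = kd b a := by
    intro b a
    have e : (∑ c, γ b c * P c a) = ∑ c, P a c * γ c b :=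
      Finset.sum_congr rfl fun c _ => by rw [hγs b c, hPs c a]; ring
    have hk : kd a b = kd b a := by simp [kd, eq_comm]
    rw [e, ← hk]; linarith [h1 a b]
  -- reconstruction formula
  have hrec : ∀ σ : Fin m → Fin m → ℝ,
      (∀ f c, (∑ b, σ f b * γ b c) = tauMixP P n n2 V f c) →
      (∀ f, (∑ b, σ f b * ℓ b) = tauVecP P n V f) →
      ∀ f a, σ f a
        = (∑ c, tauMixP P n n2 V f c * P c a) + tauVecP P n V f * n a := by
    intro σ hA hB f a
    have key : (∑ c, (∑ b, σ f b * γ b c) * P c a) + (∑ b, σ f b * ℓ b) * n a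
        = σ f a := by
      calc (∑ c, (∑ b, σ f b * γ b c) * P c a) + (∑ b, σ f b * ℓ b) * n a
          = (∑ c, ∑ b, (σ f b * γ b c) * P c a) + ∑ b, (σ f b * ℓ b) * n a := by
            simp only [Finset.sum_mul]
        _ = (∑ b, ∑ c, (σ f b * γ b c) * P c a) + ∑ b, (σ f b * ℓ b) * n a := by
            rw [Finset.sum_comm]
        _ = ∑ b, ((∑ c, (σ f b * γ b c) * P c a) + (σ f b * ℓ b) * n a) := by
            rw [Finset.sum_add_distrib]
        _ = ∑ b, kd b a * σ f b := by
            refine Finset.sum_congr rfl fun b _ => ?_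
            have e2 : (∑ c, (σ f b * γ b c) * P c a)
                = σ f b * (∑ c, γ b c * P c a) := by
              rw [Finset.mul_sum]; exact Finset.sum_congr rfl fun c _ => by ring
            rw [e2, ← hγP b a]; ring
        _ = σ f a := kd_collapse' a _
    rw [← key]; simp only [hA, hB]
  refine ⟨?_, part2, part3, ?_⟩
  · -- part 1: n^c τ^f_c + n⁽²⁾ T^f = 0
    intro f
    have t2 : (∑ c, n c * (∑ q, P f q * V q c))
        = ∑ p, ∑ q, P f p * (n q * V p q) := by
      calc (∑ c, n c * (∑ q, P f q * V q c))
          = ∑ c, ∑ q, n c * (P f q * V q c) := by simp only [Finset.mul_sum]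
        _ = ∑ q, ∑ c, n c * (P f q * V q c) := Finset.sum_comm
        _ = ∑ p, ∑ q, P f p * (n q * V p q) :=
            Finset.sum_congr rfl fun q _ => Finset.sum_congr rfl fun c _ => by ring
    have e : ∀ c : Fin m, n c * tauMixP P n n2 V f c
        = n f * (n c * (∑ q, n q * V c q)) - n2 * (n c * (∑ q, P f q * V q c))
          - kd f c * (n c * NNv) + n2 * (kd f c * (n c * Sv)) := by
      intro c; rw [hMix f c]; ring
    have t1 : (∑ c, n c * tauMixP P n n2 V f c)
        = n f * NNv - n2 * (∑ p, ∑ q, P f p * (n q * V p q))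
          - n f * NNv + n2 * (n f * Sv) := by
      simp only [e, Finset.sum_sub_distrib, Finset.sum_add_distrib,
        ← Finset.mul_sum, kd_collapse, t2, hNNv, hSv]
    rw [t1, hVec f]; ring
  · -- uniqueness
    intro τ' hA hB f a
    rw [hrec τ' hA hB f a, hrec (tauP P n n2 V) part2 part3 f a]
end
end

section
/- Let m ≥ 2, let (γ, ℓ, ℓ⁽²⁾) be pointwise hypersurface metric data with inverse blocks (P, n, n⁽²⁾), let V = (V_{ab}) be a symmetric m×m matrix, and let τ^{fa} := (n^fP^{ac} + n^aP^{fc})n^dV_{cd} − (n⁽²⁾P^{fc}P^{ad} + P^{fa}n^cn^d)V_{cd} + (n⁽²⁾P^{fa} − n^fn^a)P^{cd}V_{cd} be the shell energy–momentum tensor. Then: (i) τ^{fa} = τ^{af}; (ii) if n⁽²⁾ ≠ 0 then τ^{fa} = 0 (for all f,a) if and only if V_{ab} = 0, while if n⁽²⁾ = 0 then τ^{fa} = 0 if and only if V_{ab}n^b = 0 for all a and P^{ab}V_{ab} = 0; (iii) for any u ≠ 0 and W = (W^a) ∈ ℝ^m, if τ'^{fa} denotes the same expression built from the gauge-transformed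 quantities V'_{ab} = uV_{ab}, P'^{ab} = P^{ab} + n⁽²⁾W^aW^b − W^an^b − W^bn^a, n'^a = u⁻¹(n^a − n⁽²⁾W^a), n⁽²⁾' = u⁻²n⁽²⁾, then τ'^{fa} = u⁻¹τ^{fa}; (iv) if ℓ_a = 0 for all a and ℓ⁽²⁾ = ε with ε ∈ {1, −1} (so that γ is invertible, P = γ⁻¹, n = 0, n⁽²⁾ = ε) and V_{ab} = ε[K_{ab}] for a symmetric matrix [K_{ab}], then τ^{ab} = −γ^{ac}γ^{bd}[K_{cd}] + γ^{ab}γ^{cd}[K_{cd}], where γ^{ab} are the entries of γ⁻¹. -/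
open scoped BigOperators

noncomputable section

section Tau17Aux
open HypData
variable {m : ℕ}

/-- bilinear contraction `∑ X^c Y^d V_{cd}`. -/
def tbil (V : Fin m → Fin m → ℝ) (X Y : Fin m → ℝ) : ℝ := ∑ c, ∑ d, X c * Y d * V c d

/-- trace contraction `∑ P^{cd} V_{cd}`. -/
def ttrv (P V : Fin m → Fin m → ℝ) : ℝ := ∑ c, ∑ d, P c d * V c d

lemma tbil_symm {V : Fin m → Fin m → ℝ} (hV : ∀ a b, V a b = V b a) (X Y : Fin m → ℝ) :
    tbil V X Y = tbil V Y X := by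
  unfold tbil
  rw [Finset.sum_comm]
  refine Finset.sum_congr rfl fun c _ => Finset.sum_congr rfl fun d _ => ?_
  rw [hV d c]; ring

lemma tbil_congr_left {V : Fin m → Fin m → ℝ} {X X' Y : Fin m → ℝ}
    (h : ∀ c, X c = X' c) : tbil V X Y = tbil V X' Y := by
  unfold tbil
  exact Finset.sum_congr rfl fun c _ => Finset.sum_congr rfl fun d _ => by rw [h c]

lemma tbil_congr_right {V : Fin m → Fin m → ℝ} {X Y Y' : Fin m → ℝ}
    (h : ∀ d, Y d = Y' d) : tbil V X Y = tbil V X Y' := by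
  unfold tbil
  exact Finset.sum_congr rfl fun c _ => Finset.sum_congr rfl fun d _ => by rw [h d]

lemma tbil_sum_left (M : Fin m → ℝ) (X : Fin m → Fin m → ℝ) (Y : Fin m → ℝ)
    (V : Fin m → Fin m → ℝ) :
    (∑ f, M f * tbil V (X f) Y) = tbil V (fun c => ∑ f, M f * X f c) Y := by
  unfold tbil
  simp only [Finset.mul_sum, Finset.sum_mul]
  rw [Finset.sum_comm]
  refine Finset.sum_congr rfl fun c _ => ?_
  rw [Finset.sum_comm]
  refine Finset.sum_congr rfl fun d _ => Finset.sum_congr rfl fun f _ => by ring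

lemma tbil_sum_right (M : Fin m → ℝ) (Y : Fin m → Fin m → ℝ) (X : Fin m → ℝ)
    (V : Fin m → Fin m → ℝ) :
    (∑ f, M f * tbil V X (Y f)) = tbil V X (fun d => ∑ f, M f * Y f d) := by
  unfold tbil
  simp only [Finset.mul_sum, Finset.sum_mul]
  rw [Finset.sum_comm]
  refine Finset.sum_congr rfl fun c _ => ?_
  rw [Finset.sum_comm]
  refine Finset.sum_congr rfl fun d _ => Finset.sum_congr rfl fun f _ => by ring

lemma tbil_smul_left {V : Fin m → Fin m → ℝ} (r : ℝ) (X Y : Fin m → ℝ) :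
    tbil V (fun c => r * X c) Y = r * tbil V X Y := by
  unfold tbil
  simp only [Finset.mul_sum]
  refine Finset.sum_congr rfl fun c _ => Finset.sum_congr rfl fun d _ => by ring

lemma tbil_smul_right {V : Fin m → Fin m → ℝ} (r : ℝ) (X Y : Fin m → ℝ) :
    tbil V X (fun d => r * Y d) = r * tbil V X Y := by
  unfold tbil
  simp only [Finset.mul_sum]
  refine Finset.sum_congr rfl fun c _ => Finset.sum_congr rfl fun d _ => by ring

lemma tbil_sub_left {V : Fin m → Fin m → ℝ} (X X' Y : Fin m → ℝ) :
    tbil V (fun c => X c - X' c) Y = tbil V X Y - tbil V X' Y := by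
  unfold tbil
  simp only [← Finset.sum_sub_distrib]
  refine Finset.sum_congr rfl fun c _ => Finset.sum_congr rfl fun d _ => by ring

lemma tbil_sub_right {V : Fin m → Fin m → ℝ} (X Y Y' : Fin m → ℝ) :
    tbil V X (fun d => Y d - Y' d) = tbil V X Y - tbil V X Y' := by
  unfold tbil
  simp only [← Finset.sum_sub_distrib]
  refine Finset.sum_congr rfl fun c _ => Finset.sum_congr rfl fun d _ => by ring

lemma tbil_kd_left {V : Fin m → Fin m → ℝ} (a : Fin m) (Y : Fin m → ℝ) :
    tbil V (kd a) Y = ∑ d, Y d * V a d := by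
  unfold tbil kd
  rw [Finset.sum_comm]
  refine Finset.sum_congr rfl fun d _ => ?_
  simp [ite_mul, one_mul, zero_mul, Finset.sum_ite_eq]

lemma tbil_kd_right {V : Fin m → Fin m → ℝ} (a : Fin m) (X : Fin m → ℝ) :
    tbil V X (kd a) = ∑ c, X c * V c a := by
  unfold tbil kd
  refine Finset.sum_congr rfl fun c _ => ?_
  simp [mul_ite, ite_mul, one_mul, zero_mul, mul_zero, Finset.sum_ite_eq]

lemma tbil_zero_right {V : Fin m → Fin m → ℝ} (X : Fin m → ℝ) :
    tbil V X (fun _ => (0:ℝ)) = 0 := by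
  unfold tbil; simp

/-- `τ^{fa}` in terms of scalar contractions. -/
lemma tau_repr (P : Fin m → Fin m → ℝ) (n : Fin m → ℝ) (n2 : ℝ)
    (V : Fin m → Fin m → ℝ) (f a : Fin m) :
    tauP P n n2 V f a
      = n f * tbil V (P a) n + n a * tbil V (P f) n - n2 * tbil V (P f) (P a)
        - P f a * tbil V n n + (n2 * P f a - n f * n a) * ttrv P V := by
  unfold tauP tbil ttrv
  simp only [Finset.mul_sum, Finset.sum_mul, sub_mul, add_mul,
    ← Finset.sum_add_distrib, ← Finset.sum_sub_distrib]
  refine Finset.sum_congr rfl fun c _ => Finset.sum_congr rfl fun d _ => by ring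

/-- right-inverse identity `γP = 1 - ℓ nᵀ` derived from the left-inverse relations. -/
lemma rinv {m : ℕ} {γ : Fin m → Fin m → ℝ} {ℓ : Fin m → ℝ} {ℓ2 : ℝ}
    {P : Fin m → Fin m → ℝ} {n : Fin m → ℝ} {n2 : ℝ}
    (hγs : ∀ a b, γ a b = γ b a) (hPs : ∀ a b, P a b = P b a)
    (hinv : InvBlocks γ ℓ ℓ2 P n n2) :
    ∀ a b, (∑ c, γ a c * P c b) = kd a b - ℓ a * n b := by
  classical
  obtain ⟨h1, h2, h3, h4⟩ := hinv
  set M : Matrix (Fin m ⊕ Unit) (Fin m ⊕ Unit) ℝ := Matrix.of fun i j =>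
    match i, j with
    | Sum.inl a, Sum.inl b => γ a b
    | Sum.inl a, Sum.inr _ => ℓ a
    | Sum.inr _, Sum.inl b => ℓ b
    | Sum.inr _, Sum.inr _ => ℓ2 with hM
  set N : Matrix (Fin m ⊕ Unit) (Fin m ⊕ Unit) ℝ := Matrix.of fun i j =>
    match i, j with
    | Sum.inl a, Sum.inl b => P a b
    | Sum.inl a, Sum.inr _ => n a
    | Sum.inr _, Sum.inl b => n b
    | Sum.inr _, Sum.inr _ => n2 with hN
  have hNM : N * M = 1 := by
    ext i j
    cases i with
    | inl a =>
      cases j with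
      | inl b =>
        simpa [Matrix.mul_apply, Fintype.sum_sum_type, hM, hN, Matrix.one_apply, kd] using h1 a b
      | inr u =>
        simpa [Matrix.mul_apply, Fintype.sum_sum_type, hM, hN, Matrix.one_apply, mul_comm]
          using h2 a
    | inr u =>
      cases j with
      | inl b =>
        have h4' : (∑ c, n c * γ c b) + n2 * ℓ b = 0 := by
          have := h4 b
          calc (∑ c, n c * γ c b) + n2 * ℓ b
              = (∑ c, γ b c * n c) + n2 * ℓ b := by
                refine congrArg (· + n2 * ℓ b) ?_
                exact Finset.sum_congr rfl fun c _ => by rw [hγs]; ring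
            _ = 0 := this
        simpa [Matrix.mul_apply, Fintype.sum_sum_type, hM, hN, Matrix.one_apply] using h4'
      | inr v =>
        simpa [Matrix.mul_apply, Fintype.sum_sum_type, hM, hN, Matrix.one_apply] using h3
  have hMN : M * N = 1 := mul_eq_one_comm.mp hNM
  intro a b
  have h5 : (M * N) (Sum.inl a) (Sum.inl b) = (1 : Matrix (Fin m ⊕ Unit) (Fin m ⊕ Unit) ℝ)
      (Sum.inl a) (Sum.inl b) := by rw [hMN]
  simp [Matrix.mul_apply, Fintype.sum_sum_type, hM, hN, Matrix.one_apply] at h5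
  simp only [kd]
  linarith [h5]

end Tau17Aux

set_option maxHeartbeats 2000000

open HypData in
/-- Proposition 6 of the paper, properties of the shell
energy-momentum tensor `τ^{fa}`. -/
theorem statement17 (m : ℕ) (hm : 2 ≤ m)
    (γ : Fin m → Fin m → ℝ) (ℓ : Fin m → ℝ) (ℓ2 : ℝ)
    (P : Fin m → Fin m → ℝ) (n : Fin m → ℝ) (n2 : ℝ)
    (hγs : ∀ a b, γ a b = γ b a) (hPs : ∀ a b, P a b = P b a)
    (hinv : InvBlocks γ ℓ ℓ2 P n n2)
    (V : Fin m → Fin m → ℝ) (hVs : ∀ a b, V a b = V b a) :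
    -- (i) symmetry
    ((∀ f a, tauP P n n2 V f a = tauP P n n2 V a f)
    -- (ii) vanishing criteria
    ∧ (n2 ≠ 0 → ((∀ f a, tauP P n n2 V f a = 0) ↔ ∀ a b, V a b = 0))
    ∧ (n2 = 0 → ((∀ f a, tauP P n n2 V f a = 0) ↔
        ((∀ a, (∑ b, V a b * n b) = 0) ∧ (∑ a, ∑ b, P a b * V a b) = 0)))
    -- (iii) gauge behaviour
    ∧ (∀ u : ℝ, u ≠ 0 → ∀ Wg : Fin m → ℝ,
        ∀ f a,
          tauP (fun a' b' => P a' b' + n2 * Wg a' * Wg b' - Wg a' * n b' - Wg b' * n a')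
            (fun a' => u⁻¹ * (n a' - n2 * Wg a')) ((u ^ 2)⁻¹ * n2)
            (fun a' b' => u * V a' b') f a
          = u⁻¹ * tauP P n n2 V f a)
    -- (iv) the non-degenerate normal gauge
    ∧ (∀ ε : ℝ, (ε = 1 ∨ ε = -1) → (∀ a, ℓ a = 0) → ℓ2 = ε →
        ∀ Kjump : Fin m → Fin m → ℝ, (∀ a b, Kjump a b = Kjump b a) →
        (∀ a b, V a b = ε * Kjump a b) →
        ∀ f a,
          tauP P n n2 V f a
            = -(∑ c, ∑ d, P f c * P a d * Kjump c d)
              + P f a * (∑ c, ∑ d, P c d * Kjump c d))) := by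
  classical
  have hrinv := rinv hγs hPs hinv
  obtain ⟨h1, h2, h3, h4⟩ := hinv
  -- basic contraction identities
  have hPl : ∀ a, (∑ b, P a b * ℓ b) = -(ℓ2 * n a) := fun a => by linarith [h2 a]
  have hlP : ∀ c, (∑ a, ℓ a * P a c) = -(ℓ2 * n c) := fun c => by
    have e : (∑ a, ℓ a * P a c) = ∑ b, P c b * ℓ b :=
      Finset.sum_congr rfl fun a _ => by rw [hPs]; ring
    rw [e, hPl c]
  have hγn : ∀ a, (∑ b, γ a b * n b) = -(n2 * ℓ a) := fun a => by linarith [h4 a]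
  have hγn' : ∀ a, (∑ f, γ f a * n f) = -(n2 * ℓ a) := fun a => by
    have e : (∑ f, γ f a * n f) = ∑ f, γ a f * n f :=
      Finset.sum_congr rfl fun f _ => by rw [hγs]
    rw [e, hγn a]
  have hnl : (∑ a, n a * ℓ a) = 1 - n2 * ℓ2 := by linarith [h3]
  have hneg_l : ∀ (X Y : Fin m → ℝ) (r : ℝ),
      tbil V (fun c => -(r * X c)) Y = -(r * tbil V X Y) := fun X Y r => by
    rw [tbil_congr_left (X' := fun c => (-r) * X c) (fun c => by ring), tbil_smul_left]; ring
  have hneg_r : ∀ (X Y : Fin m → ℝ) (r : ℝ),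
      tbil V X (fun d => -(r * Y d)) = -(r * tbil V X Y) := fun X Y r => by
    rw [tbil_congr_right (Y' := fun d => (-r) * Y d) (fun d => by ring), tbil_smul_right]; ring
  have hlQ : (∑ a, ℓ a * tbil V (P a) n) = -(ℓ2 * tbil V n n) := by
    rw [tbil_sum_left, tbil_congr_left (X' := fun c => -(ℓ2 * n c)) hlP, hneg_l]
  have hQl : ∀ f, (∑ a, ℓ a * tbil V (P f) (P a)) = -(ℓ2 * tbil V (P f) n) := fun f => by
    rw [tbil_sum_right, tbil_congr_right (Y' := fun d => -(ℓ2 * n d)) hlP, hneg_r]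
  -- C1 : γ·Q
  have hC1 : ∀ a, (∑ f, γ a f * tbil V (P f) n)
      = (∑ d, n d * V a d) - ℓ a * tbil V n n := fun a => by
    rw [tbil_sum_left, tbil_congr_left (X' := fun c => kd a c - ℓ a * n c) (hrinv a),
      tbil_sub_left, tbil_kd_left, tbil_smul_left]
  -- C2 : τ·ℓ
  have hC2 : ∀ f, (∑ a, tauP P n n2 V f a * ℓ a)
      = tbil V (P f) n - n f * ttrv P V := fun f => by
    have hsplit : (∑ a, tauP P n n2 V f a * ℓ a)
        = n f * (∑ a, ℓ a * tbil V (P a) n) + (∑ a, n a * ℓ a) * tbil V (P f) n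
          - n2 * (∑ a, ℓ a * tbil V (P f) (P a)) - (∑ a, P f a * ℓ a) * tbil V n n
          + (n2 * (∑ a, P f a * ℓ a) - n f * (∑ a, n a * ℓ a)) * ttrv P V := by
      simp only [tau_repr, Finset.mul_sum, Finset.sum_mul, sub_mul, add_mul,
        ← Finset.sum_add_distrib, ← Finset.sum_sub_distrib]
      exact Finset.sum_congr rfl fun a _ => by ring
    rw [hsplit, hlQ, hQl f, hPl f, hnl]; ring
  -- C3 : trace γ·τ
  have hC3 : (∑ f, ∑ a, γ f a * tauP P n n2 V f a)
      = ((m : ℝ) - 1) * (n2 * ttrv P V - tbil V n n) := by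
    have ca : (∑ f, ∑ a, γ f a * (n f * tbil V (P a) n)) = n2 * ℓ2 * tbil V n n := by
      rw [Finset.sum_comm]
      have e1 : ∀ a, (∑ f, γ f a * (n f * tbil V (P a) n))
          = -(n2 * ℓ a) * tbil V (P a) n := fun a => by
        rw [show (∑ f, γ f a * (n f * tbil V (P a) n)) = (∑ f, γ f a * n f) * tbil V (P a) n from
          by rw [Finset.sum_mul]; exact Finset.sum_congr rfl fun f _ => by ring, hγn' a]
      calc (∑ a, ∑ f, γ f a * (n f * tbil V (P a) n))
          = ∑ a, -(n2 * ℓ a) * tbil V (P a) n := Finset.sum_congr rfl fun a _ => e1 a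
        _ = (-n2) * ∑ a, ℓ a * tbil V (P a) n := by
            rw [Finset.mul_sum]; exact Finset.sum_congr rfl fun a _ => by ring
        _ = n2 * ℓ2 * tbil V n n := by rw [hlQ]; ring
    have cb : (∑ f, ∑ a, γ f a * (n a * tbil V (P f) n)) = n2 * ℓ2 * tbil V n n := by
      have e1 : ∀ f, (∑ a, γ f a * (n a * tbil V (P f) n))
          = -(n2 * ℓ f) * tbil V (P f) n := fun f => by
        rw [show (∑ a, γ f a * (n a * tbil V (P f) n)) = (∑ a, γ f a * n a) * tbil V (P f) n from
          by rw [Finset.sum_mul]; exact Finset.sum_congr rfl fun a _ => by ring, hγn f]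
      calc (∑ f, ∑ a, γ f a * (n a * tbil V (P f) n))
          = ∑ f, -(n2 * ℓ f) * tbil V (P f) n := Finset.sum_congr rfl fun f _ => e1 f
        _ = (-n2) * ∑ f, ℓ f * tbil V (P f) n := by
            rw [Finset.mul_sum]; exact Finset.sum_congr rfl fun f _ => by ring
        _ = n2 * ℓ2 * tbil V n n := by rw [hlQ]; ring
    have cc : (∑ f, ∑ a, γ f a * tbil V (P f) (P a)) = ttrv P V + ℓ2 * tbil V n n := by
      have e1 : ∀ f, (∑ a, γ f a * tbil V (P f) (P a))
          = (∑ c, P f c * V c f) - ℓ f * tbil V (P f) n := fun f => by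
        rw [tbil_sum_right, tbil_congr_right (Y' := fun d => kd f d - ℓ f * n d) (hrinv f),
          tbil_sub_right, tbil_kd_right, tbil_smul_right]
      have e2 : (∑ f, ∑ c, P f c * V c f) = ttrv P V := by
        unfold ttrv
        exact Finset.sum_congr rfl fun c _ => Finset.sum_congr rfl fun d _ => by rw [hVs d c]
      calc (∑ f, ∑ a, γ f a * tbil V (P f) (P a))
          = ∑ f, ((∑ c, P f c * V c f) - ℓ f * tbil V (P f) n) :=
            Finset.sum_congr rfl fun f _ => e1 f
        _ = (∑ f, ∑ c, P f c * V c f) - ∑ f, ℓ f * tbil V (P f) n := Finset.sum_sub_distrib _ _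
        _ = ttrv P V + ℓ2 * tbil V n n := by rw [e2, hlQ]; ring
    have cd : (∑ f, ∑ a, γ f a * P f a) = (m : ℝ) - 1 + n2 * ℓ2 := by
      rw [Finset.sum_comm]
      have e1 : ∀ a, (∑ f, γ f a * P f a) = 1 - ℓ a * n a := fun a => by
        have e : (∑ f, γ f a * P f a) = ∑ f, γ a f * P f a :=
          Finset.sum_congr rfl fun f _ => by rw [hγs]
        rw [e, hrinv a a]; simp [kd]
      calc (∑ a, ∑ f, γ f a * P f a) = ∑ a : Fin m, (1 - ℓ a * n a) :=
            Finset.sum_congr rfl fun a _ => e1 a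
        _ = (m : ℝ) - ∑ a, ℓ a * n a := by
            rw [Finset.sum_sub_distrib]; simp [Finset.card_univ]
        _ = (m : ℝ) - 1 + n2 * ℓ2 := by
            rw [show (∑ a, ℓ a * n a) = ∑ a, n a * ℓ a from
              Finset.sum_congr rfl fun a _ => by ring, hnl]; ring
    have ce : (∑ f, ∑ a, γ f a * (n f * n a)) = -(n2 * (1 - n2 * ℓ2)) := by
      have e1 : ∀ f, (∑ a, γ f a * (n f * n a)) = n f * (-(n2 * ℓ f)) := fun f => by
        rw [show (∑ a, γ f a * (n f * n a)) = n f * ∑ a, γ f a * n a from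
          by rw [Finset.mul_sum]; exact Finset.sum_congr rfl fun a _ => by ring, hγn f]
      calc (∑ f, ∑ a, γ f a * (n f * n a)) = ∑ f, n f * (-(n2 * ℓ f)) :=
            Finset.sum_congr rfl fun f _ => e1 f
        _ = (-n2) * ∑ f, n f * ℓ f := by
            rw [Finset.mul_sum]; exact Finset.sum_congr rfl fun f _ => by ring
        _ = -(n2 * (1 - n2 * ℓ2)) := by rw [hnl]; ring
    have hsplit : (∑ f, ∑ a, γ f a * tauP P n n2 V f a)
        = (∑ f, ∑ a, γ f a * (n f * tbil V (P a) n))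
          + (∑ f, ∑ a, γ f a * (n a * tbil V (P f) n))
          - n2 * (∑ f, ∑ a, γ f a * tbil V (P f) (P a))
          - tbil V n n * (∑ f, ∑ a, γ f a * P f a)
          + ttrv P V * (n2 * (∑ f, ∑ a, γ f a * P f a)
              - (∑ f, ∑ a, γ f a * (n f * n a))) := by
      simp only [tau_repr, Finset.mul_sum, Finset.sum_mul, sub_mul, add_mul, mul_sub, mul_add,
        ← Finset.sum_add_distrib, ← Finset.sum_sub_distrib]
      exact Finset.sum_congr rfl fun f _ => Finset.sum_congr rfl fun a _ => by ring
    rw [hsplit, ca, cb, cc, cd, ce]; ring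
  -- C4 : V·n via γ·Q
  have hC4 : ∀ a, (∑ b, V a b * n b)
      = (∑ f, γ a f * tbil V (P f) n) + tbil V n n * ℓ a := fun a => by
    rw [hC1 a, show (∑ b, V a b * n b) = ∑ d, n d * V a d from
      Finset.sum_congr rfl fun d _ => by ring]
    ring
  -- C5 : γ A γ reconstruction
  have hC5 : ∀ g h', (∑ f, ∑ a, γ g f * (γ h' a * tbil V (P f) (P a)))
      = V g h' - ℓ g * (∑ c, n c * V c h')
        - ((∑ d, n d * V g d) - ℓ g * tbil V n n) * ℓ h' := by
    intro g h'
    have e1 : ∀ f, (∑ a, γ h' a * tbil V (P f) (P a))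
        = (∑ c, P f c * V c h') - ℓ h' * tbil V (P f) n := fun f => by
      rw [tbil_sum_right, tbil_congr_right (Y' := fun d => kd h' d - ℓ h' * n d) (hrinv h'),
        tbil_sub_right, tbil_kd_right, tbil_smul_right]
    have e2 : (∑ f, γ g f * (∑ c, P f c * V c h')) = V g h' - ℓ g * (∑ c, n c * V c h') := by
      have swap : (∑ f, γ g f * (∑ c, P f c * V c h'))
          = ∑ c, (∑ f, γ g f * P f c) * V c h' := by
        simp only [Finset.mul_sum, Finset.sum_mul]
        rw [Finset.sum_comm]
        exact Finset.sum_congr rfl fun c _ => Finset.sum_congr rfl fun f _ => by ring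
      rw [swap]
      calc (∑ c, (∑ f, γ g f * P f c) * V c h')
          = ∑ c, (kd g c - ℓ g * n c) * V c h' :=
            Finset.sum_congr rfl fun c _ => by rw [hrinv g c]
        _ = (∑ c, kd g c * V c h') - ℓ g * (∑ c, n c * V c h') := by
            simp only [sub_mul, Finset.sum_sub_distrib, Finset.mul_sum]
            congr 1
            exact Finset.sum_congr rfl fun c _ => by ring
        _ = V g h' - ℓ g * (∑ c, n c * V c h') := by
            congr 1
            simp [kd, ite_mul, Finset.sum_ite_eq]
    calc (∑ f, ∑ a, γ g f * (γ h' a * tbil V (P f) (P a)))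
        = ∑ f, γ g f * (∑ a, γ h' a * tbil V (P f) (P a)) :=
          Finset.sum_congr rfl fun f _ => (Finset.mul_sum _ _ _).symm
      _ = ∑ f, γ g f * ((∑ c, P f c * V c h') - ℓ h' * tbil V (P f) n) :=
          Finset.sum_congr rfl fun f _ => by rw [e1 f]
      _ = (∑ f, γ g f * (∑ c, P f c * V c h')) - ℓ h' * (∑ f, γ g f * tbil V (P f) n) := by
          simp only [mul_sub, Finset.sum_sub_distrib, Finset.mul_sum]
          congr 1
          exact Finset.sum_congr rfl fun f _ => by ring
      _ = (V g h' - ℓ g * (∑ c, n c * V c h'))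
            - ℓ h' * ((∑ d, n d * V g d) - ℓ g * tbil V n n) := by rw [e2, hC1 g]
      _ = V g h' - ℓ g * (∑ c, n c * V c h')
            - ((∑ d, n d * V g d) - ℓ g * tbil V n n) * ℓ h' := by ring
  refine ⟨?_, ?_, ?_, ?_, ?_⟩
  · -- (i) symmetry
    intro f a
    rw [tau_repr P n n2 V f a, tau_repr P n n2 V a f, tbil_symm hVs (P f) (P a), hPs f a]
    ring
  · -- (ii) n2 ≠ 0
    intro hn2
    constructor
    · intro hτ
      have hQ : ∀ f, tbil V (P f) n = n f * ttrv P V := fun f => by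
        have h := hC2 f
        simp only [hτ, zero_mul, Finset.sum_const_zero] at h
        linarith
      have hST : tbil V n n = n2 * ttrv P V := by
        have h := hC3
        simp only [hτ, mul_zero, Finset.sum_const_zero] at h
        have hm1 : ((m : ℝ) - 1) ≠ 0 := by
          have : (2 : ℝ) ≤ (m : ℝ) := by exact_mod_cast hm
          intro h0; linarith
        have h' := mul_eq_zero.mp h.symm
        rcases h' with h' | h'
        · exact absurd h' hm1
        · linarith
      have hVn : ∀ a, (∑ b, V a b * n b) = 0 := fun a => by
        rw [hC4 a]
        rw [show (∑ f, γ a f * tbil V (P f) n) = (∑ f, γ a f * n f) * ttrv P V from by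
          rw [Finset.sum_mul]
          exact Finset.sum_congr rfl fun f _ => by rw [hQ f]; ring]
        rw [hγn a, hST]; ring
      have hS0 : tbil V n n = 0 := by
        have e : tbil V n n = ∑ c, n c * (∑ b, V c b * n b) := by
          unfold tbil
          refine Finset.sum_congr rfl fun c _ => ?_
          rw [Finset.mul_sum]
          exact Finset.sum_congr rfl fun d _ => by ring
        rw [e]
        simp [hVn]
      have hT0 : ttrv P V = 0 := by
        have h := hST; rw [hS0] at h
        rcases mul_eq_zero.mp h.symm with h' | h'
        · exact absurd h' hn2
        · exact h'
      have hA0 : ∀ f a, tbil V (P f) (P a) = 0 := fun f a => by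
        have h := tau_repr P n n2 V f a
        rw [hτ f a, hQ f, hQ a, hS0, hT0] at h
        have h' : n2 * tbil V (P f) (P a) = 0 := by linarith [h]
        rcases mul_eq_zero.mp h' with h'' | h''
        · exact absurd h'' hn2
        · exact h''
      intro a b
      have h5 := hC5 a b
      have hz : (∑ f, ∑ a', γ a f * (γ b a' * tbil V (P f) (P a'))) = 0 := by
        simp only [hA0, mul_zero, Finset.sum_const_zero]
      have hnV : (∑ c, n c * V c b) = 0 := by
        rw [show (∑ c, n c * V c b) = ∑ c, V b c * n c from
          Finset.sum_congr rfl fun c _ => by rw [hVs]; ring]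
        exact hVn b
      have hVn' : (∑ d, n d * V a d) = 0 := by
        rw [show (∑ d, n d * V a d) = ∑ d, V a d * n d from
          Finset.sum_congr rfl fun d _ => by ring]
        exact hVn a
      rw [hz, hnV, hVn', hS0] at h5
      linarith
    · intro hV0 f a
      simp [tauP, hV0]
  · -- (ii) n2 = 0
    intro hn2
    constructor
    · intro hτ
      have hQ : ∀ f, tbil V (P f) n = n f * ttrv P V := fun f => by
        have h := hC2 f
        simp only [hτ, zero_mul, Finset.sum_const_zero] at h
        linarith
      have hS0 : tbil V n n = 0 := by
        have h := hC3
        simp only [hτ, mul_zero, Finset.sum_const_zero] at h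
        rw [hn2] at h
        have hm1 : ((m : ℝ) - 1) ≠ 0 := by
          have : (2 : ℝ) ≤ (m : ℝ) := by exact_mod_cast hm
          intro h0; linarith
        have h' := mul_eq_zero.mp h.symm
        rcases h' with h' | h'
        · exact absurd h' hm1
        · linarith
      have hT0 : ttrv P V = 0 := by
        have e0 : (∑ f, (∑ a, tauP P n n2 V f a * ℓ a) * ℓ f) = 0 := by
          simp [hτ]
        have e1 : (∑ f, (∑ a, tauP P n n2 V f a * ℓ a) * ℓ f)
            = (∑ f, ℓ f * tbil V (P f) n) - (∑ f, n f * ℓ f) * ttrv P V := by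
          calc (∑ f, (∑ a, tauP P n n2 V f a * ℓ a) * ℓ f)
              = ∑ f, (tbil V (P f) n - n f * ttrv P V) * ℓ f :=
                Finset.sum_congr rfl fun f _ => by rw [hC2 f]
            _ = (∑ f, ℓ f * tbil V (P f) n) - (∑ f, n f * ℓ f) * ttrv P V := by
                simp only [sub_mul, Finset.sum_sub_distrib, Finset.sum_mul]
                congr 1
                · exact Finset.sum_congr rfl fun f _ => by ring
                · exact Finset.sum_congr rfl fun f _ => by ring
        rw [e0] at e1
        rw [hlQ, hnl, hS0, hn2] at e1
        linarith
      constructor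
      · intro a
        rw [hC4 a, hS0]
        rw [show (∑ f, γ a f * tbil V (P f) n) = (∑ f, γ a f * n f) * ttrv P V from by
          rw [Finset.sum_mul]
          exact Finset.sum_congr rfl fun f _ => by rw [hQ f]; ring]
        rw [hT0]; ring
      · exact hT0
    · rintro ⟨hVn, hT⟩ f a
      have hQ0 : ∀ g : Fin m, tbil V (P g) n = 0 := fun g => by
        have e : tbil V (P g) n = ∑ c, P g c * (∑ b, V c b * n b) := by
          unfold tbil
          refine Finset.sum_congr rfl fun c _ => ?_
          rw [Finset.mul_sum]
          exact Finset.sum_congr rfl fun d _ => by ring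
        rw [e]; simp [hVn]
      have hS0 : tbil V n n = 0 := by
        have e : tbil V n n = ∑ c, n c * (∑ b, V c b * n b) := by
          unfold tbil
          refine Finset.sum_congr rfl fun c _ => ?_
          rw [Finset.mul_sum]
          exact Finset.sum_congr rfl fun d _ => by ring
        rw [e]; simp [hVn]
      have hT0 : ttrv P V = 0 := hT
      rw [tau_repr, hQ0, hQ0, hS0, hT0, hn2]; ring
  · -- (iii) gauge behaviour
    intro u hu Wg f a
    have eQ : ∀ g : Fin m, tbil (fun a' b' => u * V a' b')
        (fun b' => P g b' + n2 * Wg g * Wg b' - Wg g * n b' - Wg b' * n g)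
        (fun d => u⁻¹ * (n d - n2 * Wg d))
        = tbil V (P g) n - n2 * tbil V (P g) Wg
          + n2 * Wg g * (tbil V Wg n - n2 * tbil V Wg Wg)
          - Wg g * (tbil V n n - n2 * tbil V n Wg)
          - n g * (tbil V Wg n - n2 * tbil V Wg Wg) := by
      intro g
      unfold tbil
      simp only [Finset.mul_sum, Finset.sum_mul, sub_mul, add_mul, mul_sub, mul_add,
        ← Finset.sum_add_distrib, ← Finset.sum_sub_distrib]
      refine Finset.sum_congr rfl fun c _ => Finset.sum_congr rfl fun d _ => ?_
      field_simp
    have eS : tbil (fun a' b' => u * V a' b')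
        (fun c => u⁻¹ * (n c - n2 * Wg c)) (fun d => u⁻¹ * (n d - n2 * Wg d))
        = u⁻¹ * (tbil V n n - n2 * tbil V Wg n - n2 * tbil V n Wg
            + n2 ^ 2 * tbil V Wg Wg) := by
      unfold tbil
      simp only [Finset.mul_sum, Finset.sum_mul, sub_mul, add_mul, mul_sub, mul_add,
        ← Finset.sum_add_distrib, ← Finset.sum_sub_distrib]
      refine Finset.sum_congr rfl fun c _ => Finset.sum_congr rfl fun d _ => ?_
      field_simp
      ring
    have eA : tbil (fun a' b' => u * V a' b')
        (fun b' => P f b' + n2 * Wg f * Wg b' - Wg f * n b' - Wg b' * n f)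
        (fun b' => P a b' + n2 * Wg a * Wg b' - Wg a * n b' - Wg b' * n a)
        = u * (tbil V (P f) (P a) + n2 * Wg a * tbil V (P f) Wg - Wg a * tbil V (P f) n
            - n a * tbil V (P f) Wg
            + n2 * Wg f * (tbil V Wg (P a) + n2 * Wg a * tbil V Wg Wg
                - Wg a * tbil V Wg n - n a * tbil V Wg Wg)
            - Wg f * (tbil V n (P a) + n2 * Wg a * tbil V n Wg
                - Wg a * tbil V n n - n a * tbil V n Wg)
            - n f * (tbil V Wg (P a) + n2 * Wg a * tbil V Wg Wg
                - Wg a * tbil V Wg n - n a * tbil V Wg Wg)) := by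
      unfold tbil
      simp only [Finset.mul_sum, Finset.sum_mul, sub_mul, add_mul, mul_sub, mul_add,
        ← Finset.sum_add_distrib, ← Finset.sum_sub_distrib]
      refine Finset.sum_congr rfl fun c _ => Finset.sum_congr rfl fun d _ => by ring
    have eT : ttrv (fun a' b' => P a' b' + n2 * Wg a' * Wg b' - Wg a' * n b' - Wg b' * n a')
        (fun a' b' => u * V a' b')
        = u * (ttrv P V + n2 * tbil V Wg Wg - tbil V Wg n - tbil V n Wg) := by
      unfold ttrv tbil
      simp only [Finset.mul_sum, Finset.sum_mul, sub_mul, add_mul, mul_sub, mul_add,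
        ← Finset.sum_add_distrib, ← Finset.sum_sub_distrib]
      refine Finset.sum_congr rfl fun c _ => Finset.sum_congr rfl fun d _ => by ring
    simp only [tau_repr]
    rw [eQ f, eQ a, eS, eA, eT, tbil_symm hVs n Wg, tbil_symm hVs Wg (P a),
      tbil_symm hVs n (P a)]
    field_simp
    ring
  · -- (iv) normal gauge
    intro ε hε hl hl2 Kjump hKs hVK f a
    have hε0 : ε ≠ 0 := by rcases hε with h | h <;> rw [h] <;> norm_num
    have hn0 : ∀ c, n c = 0 := fun c => by
      have h := h2 c
      rw [hl2] at h
      simp only [hl, mul_zero, Finset.sum_const_zero, zero_add] at h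
      rcases mul_eq_zero.mp h with h' | h'
      · exact absurd h' hε0
      · exact h'
    have hn2ε : n2 = ε := by
      have h := h3
      rw [hl2] at h
      simp only [hl, mul_zero, Finset.sum_const_zero, zero_add] at h
      rcases hε with hh | hh <;> rw [hh] at h ⊢ <;> linarith
    have hz : ∀ X : Fin m → ℝ, tbil V X n = 0 := fun X => by
      rw [tbil_congr_right (Y' := fun _ => (0 : ℝ)) hn0]
      exact tbil_zero_right X
    have hA : tbil V (P f) (P a) = ε * (∑ c, ∑ d, P f c * P a d * Kjump c d) := by
      unfold tbil
      simp only [Finset.mul_sum]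
      exact Finset.sum_congr rfl fun c _ => Finset.sum_congr rfl fun d _ => by
        rw [hVK c d]; ring
    have hT : ttrv P V = ε * (∑ c, ∑ d, P c d * Kjump c d) := by
      unfold ttrv
      simp only [Finset.mul_sum]
      exact Finset.sum_congr rfl fun c _ => Finset.sum_congr rfl fun d _ => by
        rw [hVK c d]; ring
    have hee : ε * ε = 1 := by rcases hε with h | h <;> rw [h] <;> norm_num
    rw [tau_repr, hz (P f), hz (P a), hz n, hA, hT, hn0 f, hn0 a, hn2ε]
    linear_combination (-(∑ c, ∑ d, P f c * P a d * Kjump c d)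
      + P f a * (∑ c, ∑ d, P c d * Kjump c d)) * hee
end
end
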